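/- arXiv:2009.00421 — 4 statements merged into one kernel-verified Lean document; each statement's English description precedes it below -/
import Mathlib

section
/- For every ω ∈ (π, 2π) there exists a real number λ with 1/2 < λ < π/ω such that sin(λω) = −λ sin(ω). -/
/-- For every `ω ∈ (π, 2π)` there exists `λ` with `1/2 < λ < π/ω` solving the
characteristic equation `sin(λω) = -λ sin(ω)` of the Stokes edge singularity. -/
theorem stmt1 (ω : ℝ) (h1 : Real.pi < ω) (h2 : ω < 2 * Real.pi) :
    ∃ lam : ℝ, 1 / 2 < lam ∧ lam < Real.pi / ω ∧
      Real.sin (lam * ω) = -lam * Real.sin ω := by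
  have hpi := Real.pi_pos
  have hω : 0 < ω := hpi.trans h1
  set f : ℝ → ℝ := fun l => Real.sin (l * ω) + l * Real.sin ω with hf
  -- basic facts
  have hsin2 : 0 < Real.sin (ω / 2) := by
    apply Real.sin_pos_of_pos_of_lt_pi <;> linarith
  have hcos4 : 0 < Real.cos (ω / 4) := by
    apply Real.cos_pos_of_mem_Ioo
    rw [Set.mem_Ioo]; constructor <;> linarith
  have hsinω : Real.sin ω < 0 := by
    have h : 0 < Real.sin (ω - Real.pi) := by
      apply Real.sin_pos_of_pos_of_lt_pi <;> linarith
    rw [Real.sin_sub_pi] at h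
    linarith
  have hcosgt : -1 < Real.cos (ω / 2) := by
    have h2' : Real.cos (ω / 4) ^ 2 = 1 / 2 + Real.cos (2 * (ω / 4)) / 2 :=
      Real.cos_sq (ω / 4)
    have he : 2 * (ω / 4) = ω / 2 := by ring
    rw [he] at h2'
    nlinarith
  -- f (1/2) > 0
  have hsinω_eq : Real.sin ω = 2 * Real.sin (ω / 2) * Real.cos (ω / 2) := by
    have h := Real.sin_two_mul (ω / 2)
    rw [show 2 * (ω / 2) = ω by ring] at h
    exact h
  have hfa : 0 < f (1 / 2) := by
    simp only [hf]
    have : (1:ℝ) / 2 * ω = ω / 2 := by ring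
    rw [this, hsinω_eq]
    nlinarith
  -- f (π/ω) < 0
  have hfb : f (Real.pi / ω) < 0 := by
    simp only [hf]
    rw [div_mul_cancel₀ _ (ne_of_gt hω), Real.sin_pi]
    have : 0 < Real.pi / ω := div_pos hpi hω
    nlinarith
  have hab : (1:ℝ) / 2 < Real.pi / ω := by
    rw [lt_div_iff₀ hω]; linarith
  have hcont : ContinuousOn f (Set.Icc (1 / 2) (Real.pi / ω)) := by
    apply Continuous.continuousOn; fun_prop
  have hmem : (0:ℝ) ∈ Set.Ioo (f (Real.pi / ω)) (f (1 / 2)) := ⟨hfb, hfa⟩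
  obtain ⟨c, hc, hfc⟩ := intermediate_value_Ioo' hab.le hcont hmem
  exact ⟨c, hc.1, hc.2, by simp only [hf] at hfc; linarith⟩
end

section
/- For every ν > 0, u is twice differentiable and p is differentiable at every point of Ω, and the Stokes momentum equation −νΔu + ∇p = f holds pointwise on Ω, where Δ acts componentwise on u. -/
open MeasureTheory

noncomputable section

abbrev P3 := ℝ × ℝ × ℝ

/-- Opening angle `ω = 3π/2`. -/
def om : ℝ := 3 * Real.pi / 2

/-- The domain `Ω = G × (0,1)`, where `G` is the open unit sector of opening angle `ω = 3π/2`. -/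
def OmegaSet : Set P3 :=
  {x | ∃ r θ z : ℝ, 0 < r ∧ r < 1 ∧ 0 < θ ∧ θ < om ∧ 0 < z ∧ z < 1 ∧
    x = (r * Real.cos θ, r * Real.sin θ, z)}

/-- `Φ(φ) = 2λ[sin(ω + (λ−1)φ) − sin(λω − (λ−1)φ)]`. -/
def Phi (lam θ : ℝ) : ℝ :=
  2 * lam * (Real.sin (om + (lam - 1) * θ) - Real.sin (lam * om - (lam - 1) * θ))

/-- First velocity component in polar coordinates. -/
def u1pol (lam r θ z : ℝ) : ℝ :=
  z * r ^ lam * (-(lam * Real.sin θ * Real.cos (lam * (om - θ) + θ)) +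
    lam * Real.sin (om - θ) * Real.cos (lam * θ - θ) + Real.sin (lam * (om - θ)))

/-- Second velocity component in polar coordinates. -/
def u2pol (lam r θ z : ℝ) : ℝ :=
  z * r ^ lam * (Real.sin (lam * θ) - lam * Real.sin θ * Real.sin (lam * (om - θ) + θ) -
    lam * Real.sin (om - θ) * Real.sin (lam * θ - θ))

/-- Third velocity component in polar coordinates. -/
def u3pol (r θ : ℝ) : ℝ := r ^ ((2 : ℝ) / 3) * Real.sin (2 / 3 * θ)

/-- Directional (partial) derivative of a scalar field in direction `v`. -/
def pd (f : P3 → ℝ) (v x : P3) : ℝ := fderiv ℝ f x v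

/-- Second partial derivative (direction `v`, twice). -/
def pd2 (f : P3 → ℝ) (v x : P3) : ℝ := fderiv ℝ (fun y => fderiv ℝ f y v) x v

/-- Laplacian of a scalar field on `ℝ³`. -/
def lap3 (f : P3 → ℝ) (x : P3) : ℝ :=
  pd2 f (1, 0, 0) x + pd2 f (0, 1, 0) x + pd2 f (0, 0, 1) x

/-- Gradient of a scalar field on `ℝ³`. -/
def grad3 (f : P3 → ℝ) (x : P3) : P3 :=
  (pd f (1, 0, 0) x, pd f (0, 1, 0) x, pd f (0, 0, 1) x)

/-- Divergence of a vector field on `ℝ³`. -/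
def div3 (u : P3 → P3) (x : P3) : ℝ :=
  pd (fun y => (u y).1) (1, 0, 0) x + pd (fun y => (u y).2.1) (0, 1, 0) x +
    pd (fun y => (u y).2.2) (0, 0, 1) x

/-- Componentwise Laplacian of a vector field on `ℝ³`. -/
def vlap (u : P3 → P3) (x : P3) : P3 :=
  (lap3 (fun y => (u y).1) x, lap3 (fun y => (u y).2.1) x, lap3 (fun y => (u y).2.2) x)

/-- Pressure in polar coordinates: `p = z r^{λ−1} Φ(φ)`. -/
def ppol (lam r θ z : ℝ) : ℝ := z * r ^ (lam - 1) * Phi lam θ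

/-- First component of the data `f` in polar coordinates. -/
def f1pol (lam ν r θ z : ℝ) : ℝ :=
  2 * lam * (lam - 1) * (ν - 1) * z * r ^ (lam - 2) *
    (Real.sin (lam * om - (lam - 2) * θ) - Real.sin (om + (lam - 2) * θ))

/-- Second component of the data `f` in polar coordinates. -/
def f2pol (lam ν r θ z : ℝ) : ℝ :=
  2 * lam * (lam - 1) * (1 - ν) * z * r ^ (lam - 2) *
    (Real.cos (lam * om - (lam - 2) * θ) + Real.cos (om + (lam - 2) * θ))

/-- Third component of the data `f` in polar coordinates. -/
def f3pol (lam r θ : ℝ) : ℝ := r ^ (lam - 1) * Phi lam θ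

open Complex

set_option maxHeartbeats 2000000

def cw (q : P3) : ℂ := q.1 + q.2.1 * I
def lg (w : ℂ) : ℂ := Complex.log (-I * w) + I * (Real.pi/2)
def pw (a : ℝ) (w : ℂ) : ℂ := Complex.exp (a * lg w)
def SS : Set ℂ := {w | -I * w ∈ slitPlane}

lemma isOpen_SS : IsOpen SS :=
  isOpen_slitPlane.preimage (by continuity)

lemma ne_zero_of_SS {w : ℂ} (h : w ∈ SS) : w ≠ 0 := by
  intro h0; simp [SS, h0] at h

lemma exp_I_pi_div_two : Complex.exp (I * ((Real.pi : ℂ)/2)) = I := by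
  rw [mul_comm, Complex.exp_mul_I]
  have h1 : ((Real.pi : ℂ)/2) = ((Real.pi/2 : ℝ) : ℂ) := by push_cast; ring
  rw [h1, ← Complex.ofReal_cos, ← Complex.ofReal_sin]
  simp

lemma exp_lg {w : ℂ} (h : w ∈ SS) : Complex.exp (lg w) = w := by
  have hw : (-I * w) ≠ 0 := Complex.slitPlane_ne_zero h
  rw [lg, Complex.exp_add, Complex.exp_log hw]
  rw [exp_I_pi_div_two]
  ring_nf
  rw [Complex.I_sq]; ring

lemma hasDerivAt_lg {w : ℂ} (h : w ∈ SS) : HasDerivAt lg w⁻¹ w := by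
  have h0 : HasDerivAt (fun z : ℂ => -I * z) (-I) w := by
    simpa [neg_mul] using (hasDerivAt_id w).const_mul (-I)
  have h1 : HasDerivAt (fun z : ℂ => Complex.log (-I * z)) ((-I*w)⁻¹ * (-I)) w :=
    (Complex.hasDerivAt_log h).comp w h0
  have h2 : HasDerivAt lg ((-I*w)⁻¹ * (-I)) w := h1.add_const _
  convert h2 using 1
  have hw := ne_zero_of_SS h
  field_simp

lemma pw_add_one {a : ℝ} {w : ℂ} (h : w ∈ SS) : pw (a+1) w = pw a w * w := by
  rw [pw, pw, show (((a+1 : ℝ)) : ℂ) * lg w = a * lg w + lg w by push_cast; ring,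
    Complex.exp_add, exp_lg h]

lemma hasDerivAt_pw {a : ℝ} {w : ℂ} (h : w ∈ SS) :
    HasDerivAt (pw a) ((a:ℂ) * pw (a-1) w) w := by
  have h1 : HasDerivAt (fun z => (a:ℂ) * lg z) ((a:ℂ) * w⁻¹) w := (hasDerivAt_lg h).const_mul _
  have h2 := (Complex.hasDerivAt_exp ((a:ℂ) * lg w)).comp w h1
  have hw := ne_zero_of_SS h
  have e1 : pw a w = pw (a-1) w * w := by
    have := pw_add_one (a := a-1) h; rw [show a-1+1 = a by ring] at this; exact this
  refine h2.congr_deriv ?_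
  rw [show Complex.exp (↑a * lg w) = pw a w from rfl, e1]
  field_simp

lemma polar_decomp (r θ : ℝ) :
    -I * ((r*Real.cos θ : ℝ) + (r*Real.sin θ : ℝ)*I) =
      (r:ℂ) * (Real.cos (θ - Real.pi/2) + Real.sin (θ - Real.pi/2) * I) := by
  have h1 : Real.cos (θ - Real.pi/2) = Real.sin θ := by rw [Real.cos_sub]; simp
  have h2 : Real.sin (θ - Real.pi/2) = -Real.cos θ := by rw [Real.sin_sub]; simp
  rw [h1, h2]; push_cast; ring_nf; rw [Complex.I_sq]; ring

lemma mem_SS_polar {r θ : ℝ} (hr : 0 < r) (h1 : -(Real.pi/2) < θ) (h2 : θ < 3*Real.pi/2) :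
    ((r*Real.cos θ : ℝ) + (r*Real.sin θ : ℝ)*I : ℂ) ∈ SS := by
  have hπ := Real.pi_pos
  set ψ := θ - Real.pi/2 with hψ
  have hψ1 : -Real.pi < ψ := by rw [hψ]; linarith
  have hψ2 : ψ < Real.pi := by rw [hψ]; linarith
  show _ ∈ slitPlane
  rw [polar_decomp, Complex.mem_slitPlane_iff]
  have hre : ((r:ℂ) * ((Real.cos ψ : ℝ) + (Real.sin ψ : ℝ) * I)).re = r * Real.cos ψ := by
    set c := Real.cos ψ; set s := Real.sin ψ
    simp [Complex.mul_re]
  have him : ((r:ℂ) * ((Real.cos ψ : ℝ) + (Real.sin ψ : ℝ) * I)).im = r * Real.sin ψ := by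
    set c := Real.cos ψ; set s := Real.sin ψ
    simp [Complex.mul_im]
  rw [hre, him]
  by_cases hs : Real.sin ψ = 0
  · left
    have h0 : ψ = 0 := (Real.sin_eq_zero_iff_of_lt_of_lt hψ1 hψ2).mp hs
    rw [h0]; simpa using hr
  · right
    exact mul_ne_zero hr.ne' hs

lemma lg_polar {r θ : ℝ} (hr : 0 < r) (h1 : -(Real.pi/2) < θ) (h2 : θ < 3*Real.pi/2) :
    lg ((r*Real.cos θ : ℝ) + (r*Real.sin θ : ℝ)*I) = (Real.log r : ℂ) + θ*I := by
  have hπ := Real.pi_pos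
  set ψ := θ - Real.pi/2 with hψ
  have hψ1 : -Real.pi < ψ := by rw [hψ]; linarith
  have hψ2 : ψ ≤ Real.pi := by rw [hψ]; linarith
  set w : ℂ := ((r*Real.cos θ : ℝ) + (r*Real.sin θ : ℝ)*I) with hwdef
  have hcs : ((Real.cos ψ : ℝ) : ℂ) + (Real.sin ψ : ℝ)*I = Complex.cos ψ + Complex.sin ψ * I := by
    rw [Complex.ofReal_cos, Complex.ofReal_sin]
  have harg : Complex.arg (-I * w) = ψ := by
    rw [hwdef, polar_decomp, hcs, Complex.arg_real_mul _ hr]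
    exact Complex.arg_cos_add_sin_mul_I ⟨hψ1, hψ2⟩
  have habs : ‖-I * w‖ = r := by
    rw [hwdef, polar_decomp, norm_mul, hcs, Complex.norm_cos_add_sin_mul_I]
    simp [abs_of_pos hr]
  apply Complex.ext
  · rw [lg, Complex.add_re, Complex.log_re, habs]
    set π2 := ((Real.pi/2 : ℝ) : ℂ)
    simp
  · rw [lg, Complex.add_im, Complex.log_im, harg]
    simp [hψ]

def Acl : P3 →L[ℝ] ℂ :=
  Complex.ofRealCLM.comp (ContinuousLinearMap.fst ℝ ℝ (ℝ×ℝ)) +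
    I • (Complex.ofRealCLM.comp ((ContinuousLinearMap.fst ℝ ℝ ℝ).comp
      (ContinuousLinearMap.snd ℝ ℝ (ℝ×ℝ))))

lemma Acl_apply (q : P3) : Acl q = cw q := by
  simp [Acl, cw]; ring

def Zcl : P3 →L[ℝ] ℝ :=
  (ContinuousLinearMap.snd ℝ ℝ ℝ).comp (ContinuousLinearMap.snd ℝ ℝ (ℝ×ℝ))

lemma Zcl_apply (q : P3) : Zcl q = q.2.2 := rfl

lemma hasFDerivAt_cw (q : P3) : HasFDerivAt cw Acl q := by
  have : (fun q : P3 => Acl q) = cw := funext Acl_apply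
  exact this ▸ Acl.hasFDerivAt

def conjCL : ℂ →L[ℝ] ℂ := Complex.conjCLE.toContinuousLinearMap

lemma conjCL_apply (z : ℂ) : conjCL z = (starRingEnd ℂ) z := rfl

def MMb (c₀ c₃ : ℂ) (a : ℝ) (w : ℂ) : ℝ :=
  (c₀ * pw a w + c₃ * (starRingEnd ℂ) w * pw (a-1) w).im

def MM (c₀ c₃ : ℂ) (a : ℝ) (q : P3) : ℝ := MMb c₀ c₃ a (cw q)

def ZM (c₀ c₃ : ℂ) (a : ℝ) (q : P3) : ℝ := q.2.2 * MM c₀ c₃ a q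

def MMD (c₀ c₃ : ℂ) (a : ℝ) (w : ℂ) : P3 →L[ℝ] ℝ :=
  Complex.imCLM.comp
    (((c₀ * a * pw (a-1) w + c₃ * ((a:ℂ)-1) * (starRingEnd ℂ) w * pw (a-2) w) • Acl) +
      ((c₃ * pw (a-1) w) • (conjCL.comp Acl)))

lemma hasFDerivAt_MM {c₀ c₃ : ℂ} {a : ℝ} {q : P3} (h : cw q ∈ SS) :
    HasFDerivAt (MM c₀ c₃ a) (MMD c₀ c₃ a (cw q)) q := by
  have hA := hasFDerivAt_cw q
  have hpa : HasFDerivAt (fun y => pw a (cw y)) (((a:ℂ) * pw (a-1) (cw q)) • Acl) q :=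
    (hasDerivAt_pw h).comp_hasFDerivAt q hA
  have hpb : HasFDerivAt (fun y => pw (a-1) (cw y)) ((((a:ℂ)-1) * pw (a-1-1) (cw q)) • Acl) q := by
    have := (hasDerivAt_pw (a := a-1) h).comp_hasFDerivAt q hA
    refine this.congr_fderiv ?_
    congr 1; push_cast; ring
  have hcj : HasFDerivAt (fun y => (starRingEnd ℂ) (cw y)) (conjCL.comp Acl) q := by
    have h1 : HasFDerivAt conjCL conjCL (cw q) := conjCL.hasFDerivAt
    have := h1.comp q hA
    exact this
  have h1 : HasFDerivAt (fun y => c₀ * pw a (cw y)) (c₀ • (((a:ℂ) * pw (a-1) (cw q)) • Acl)) q :=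
    hpa.const_mul c₀
  have h2 : HasFDerivAt (fun y => c₃ * (starRingEnd ℂ) (cw y)) (c₃ • (conjCL.comp Acl)) q :=
    hcj.const_mul c₃
  have h3 : HasFDerivAt (fun y => (c₃ * (starRingEnd ℂ) (cw y)) * pw (a-1) (cw y))
      ((c₃ * (starRingEnd ℂ) (cw q)) • ((((a:ℂ)-1) * pw (a-1-1) (cw q)) • Acl) +
        (pw (a-1) (cw q)) • (c₃ • (conjCL.comp Acl))) q := by
    have := h2.mul' hpb
    refine this.congr_fderiv ?_
    apply ContinuousLinearMap.ext; intro v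
    simp [ContinuousLinearMap.smulRight_apply, smul_eq_mul]
  have h4 := (h1.add h3)
  have h5 := (Complex.imCLM.hasFDerivAt (x := c₀ * pw a (cw q) +
      c₃ * (starRingEnd ℂ) (cw q) * pw (a-1) (cw q))).comp q h4
  have he : MM c₀ c₃ a = fun y => Complex.imCLM ((fun y => c₀ * pw a (cw y) +
      c₃ * (starRingEnd ℂ) (cw y) * pw (a-1) (cw y)) y) := rfl
  rw [he]
  refine h5.congr_fderiv ?_
  apply ContinuousLinearMap.ext
  intro v
  simp only [MMD, ContinuousLinearMap.coe_comp', Function.comp_apply,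
    ContinuousLinearMap.add_apply, ContinuousLinearMap.smul_apply, Complex.imCLM_apply,
    ContinuousLinearMap.coe_smul', Pi.smul_apply]
  rw [show a-1-1 = a-2 by ring]
  congr 1
  simp only [smul_eq_mul]
  ring

lemma Acl_ex : Acl ((1:ℝ),(0:ℝ),(0:ℝ)) = 1 := by simp [Acl]
lemma Acl_ey : Acl ((0:ℝ),(1:ℝ),(0:ℝ)) = I := by simp [Acl]
lemma Acl_ez : Acl ((0:ℝ),(0:ℝ),(1:ℝ)) = 0 := by simp [Acl]

lemma MMD_ex (c₀ c₃ : ℂ) (a : ℝ) (w : ℂ) :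
    MMD c₀ c₃ a w ((1:ℝ),(0:ℝ),(0:ℝ)) = MMb (c₀*(a:ℂ) + c₃) (c₃*((a:ℂ)-1)) (a-1) w := by
  rw [MMb]
  simp only [MMD, ContinuousLinearMap.coe_comp', Function.comp_apply,
    ContinuousLinearMap.add_apply, ContinuousLinearMap.smul_apply, Complex.imCLM_apply,
    ContinuousLinearMap.coe_smul', Pi.smul_apply, Acl_ex]
  rw [show a-1-1 = a-2 by ring]
  congr 1
  rw [conjCL_apply]
  simp only [smul_eq_mul, map_one]
  ring

lemma MMD_ey (c₀ c₃ : ℂ) (a : ℝ) (w : ℂ) :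
    MMD c₀ c₃ a w ((0:ℝ),(1:ℝ),(0:ℝ)) = MMb (I*(c₀*(a:ℂ) - c₃)) (I*c₃*((a:ℂ)-1)) (a-1) w := by
  rw [MMb]
  simp only [MMD, ContinuousLinearMap.coe_comp', Function.comp_apply,
    ContinuousLinearMap.add_apply, ContinuousLinearMap.smul_apply, Complex.imCLM_apply,
    ContinuousLinearMap.coe_smul', Pi.smul_apply, Acl_ey]
  rw [show a-1-1 = a-2 by ring]
  congr 1
  rw [conjCL_apply]
  simp only [smul_eq_mul, Complex.conj_I]
  ring

lemma MMD_ez (c₀ c₃ : ℂ) (a : ℝ) (w : ℂ) :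
    MMD c₀ c₃ a w ((0:ℝ),(0:ℝ),(1:ℝ)) = 0 := by
  simp only [MMD, ContinuousLinearMap.coe_comp', Function.comp_apply,
    ContinuousLinearMap.add_apply, ContinuousLinearMap.smul_apply, Complex.imCLM_apply,
    ContinuousLinearMap.coe_smul', Pi.smul_apply, Acl_ez]
  rw [conjCL_apply]
  simp

lemma fderiv_MM_x {c₀ c₃ : ℂ} {a : ℝ} {q : P3} (h : cw q ∈ SS) :
    fderiv ℝ (MM c₀ c₃ a) q ((1:ℝ),(0:ℝ),(0:ℝ)) = MM (c₀*(a:ℂ) + c₃) (c₃*((a:ℂ)-1)) (a-1) q := by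
  rw [(hasFDerivAt_MM h).fderiv, MMD_ex]; rfl

lemma fderiv_MM_y {c₀ c₃ : ℂ} {a : ℝ} {q : P3} (h : cw q ∈ SS) :
    fderiv ℝ (MM c₀ c₃ a) q ((0:ℝ),(1:ℝ),(0:ℝ)) =
      MM (I*(c₀*(a:ℂ) - c₃)) (I*c₃*((a:ℂ)-1)) (a-1) q := by
  rw [(hasFDerivAt_MM h).fderiv, MMD_ey]; rfl

lemma fderiv_MM_z {c₀ c₃ : ℂ} {a : ℝ} {q : P3} (h : cw q ∈ SS) :
    fderiv ℝ (MM c₀ c₃ a) q ((0:ℝ),(0:ℝ),(1:ℝ)) = 0 := by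
  rw [(hasFDerivAt_MM h).fderiv, MMD_ez]

lemma hasFDerivAt_ZM {c₀ c₃ : ℂ} {a : ℝ} {q : P3} (h : cw q ∈ SS) :
    HasFDerivAt (ZM c₀ c₃ a)
      (q.2.2 • MMD c₀ c₃ a (cw q) + (MM c₀ c₃ a q) • Zcl) q := by
  have hz : HasFDerivAt (fun y : P3 => y.2.2) Zcl q := Zcl.hasFDerivAt
  have := hz.mul (hasFDerivAt_MM (c₀ := c₀) (c₃ := c₃) (a := a) h)
  exact this

lemma fderiv_ZM_x {c₀ c₃ : ℂ} {a : ℝ} {q : P3} (h : cw q ∈ SS) :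
    fderiv ℝ (ZM c₀ c₃ a) q ((1:ℝ),(0:ℝ),(0:ℝ)) = ZM (c₀*(a:ℂ) + c₃) (c₃*((a:ℂ)-1)) (a-1) q := by
  rw [(hasFDerivAt_ZM h).fderiv]
  simp only [ContinuousLinearMap.add_apply, ContinuousLinearMap.smul_apply, smul_eq_mul]
  rw [MMD_ex, Zcl_apply]
  show q.2.2 * _ + MM c₀ c₃ a q * (0:ℝ) = _
  rw [mul_zero, add_zero]; rfl

lemma fderiv_ZM_y {c₀ c₃ : ℂ} {a : ℝ} {q : P3} (h : cw q ∈ SS) :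
    fderiv ℝ (ZM c₀ c₃ a) q ((0:ℝ),(1:ℝ),(0:ℝ)) =
      ZM (I*(c₀*(a:ℂ) - c₃)) (I*c₃*((a:ℂ)-1)) (a-1) q := by
  rw [(hasFDerivAt_ZM h).fderiv]
  simp only [ContinuousLinearMap.add_apply, ContinuousLinearMap.smul_apply, smul_eq_mul]
  rw [MMD_ey, Zcl_apply]
  show q.2.2 * _ + MM c₀ c₃ a q * (0:ℝ) = _
  rw [mul_zero, add_zero]; rfl

lemma fderiv_ZM_z {c₀ c₃ : ℂ} {a : ℝ} {q : P3} (h : cw q ∈ SS) :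
    fderiv ℝ (ZM c₀ c₃ a) q ((0:ℝ),(0:ℝ),(1:ℝ)) = MM c₀ c₃ a q := by
  rw [(hasFDerivAt_ZM h).fderiv]
  simp only [ContinuousLinearMap.add_apply, ContinuousLinearMap.smul_apply, smul_eq_mul]
  rw [MMD_ez, Zcl_apply]
  simp

def S3 : Set P3 := {q | cw q ∈ SS}

lemma continuous_cw : Continuous cw := by
  have : cw = fun q => Acl q := (funext Acl_apply).symm
  rw [this]; exact Acl.continuous

lemma isOpen_S3 : IsOpen S3 := isOpen_SS.preimage continuous_cw


lemma pd2_ZM_x {c₀ c₃ : ℂ} {a : ℝ} {x : P3} (hx : x ∈ S3) :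
    pd2 (ZM c₀ c₃ a) ((1:ℝ),(0:ℝ),(0:ℝ)) x =
      ZM ((c₀*(a:ℂ)+c₃)*((a-1:ℝ):ℂ) + c₃*((a:ℂ)-1)) ((c₃*((a:ℂ)-1))*(((a-1:ℝ):ℂ)-1)) (a-1-1) x := by
  have hev : (fun y => fderiv ℝ (ZM c₀ c₃ a) y ((1:ℝ),(0:ℝ),(0:ℝ))) =ᶠ[nhds x]
      ZM (c₀*(a:ℂ)+c₃) (c₃*((a:ℂ)-1)) (a-1) := by
    filter_upwards [isOpen_S3.mem_nhds hx] with y hy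
    exact fderiv_ZM_x hy
  rw [pd2, hev.fderiv_eq]
  exact fderiv_ZM_x hx

lemma pd2_ZM_y {c₀ c₃ : ℂ} {a : ℝ} {x : P3} (hx : x ∈ S3) :
    pd2 (ZM c₀ c₃ a) ((0:ℝ),(1:ℝ),(0:ℝ)) x =
      ZM (-(((a:ℂ)-1)*(c₀*(a:ℂ) - 2*c₃))) (-(c₃*((a:ℂ)-1)*((a:ℂ)-2))) (a-1-1) x := by
  have hev : (fun y => fderiv ℝ (ZM c₀ c₃ a) y ((0:ℝ),(1:ℝ),(0:ℝ))) =ᶠ[nhds x]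
      ZM (I*(c₀*(a:ℂ) - c₃)) (I*c₃*((a:ℂ)-1)) (a-1) := by
    filter_upwards [isOpen_S3.mem_nhds hx] with y hy
    exact fderiv_ZM_y hy
  rw [pd2, hev.fderiv_eq, fderiv_ZM_y hx]
  have e1 : I*((I*(c₀*(a:ℂ) - c₃))*(((a-1:ℝ):ℂ)) - I*c₃*((a:ℂ)-1)) =
      -(((a:ℂ)-1)*(c₀*(a:ℂ) - 2*c₃)) := by
    push_cast
    linear_combination ((c₀*(a:ℂ) - c₃)*((a:ℂ)-1) - c₃*((a:ℂ)-1)) * Complex.I_mul_I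
  have e2 : I*(I*c₃*((a:ℂ)-1))*(((a-1:ℝ):ℂ)-1) = -(c₃*((a:ℂ)-1)*((a:ℂ)-2)) := by
    push_cast
    linear_combination (c₃*((a:ℂ)-1)*((a:ℂ)-2)) * Complex.I_mul_I
  rw [e1, e2]

lemma pd2_ZM_z {c₀ c₃ : ℂ} {a : ℝ} {x : P3} (hx : x ∈ S3) :
    pd2 (ZM c₀ c₃ a) ((0:ℝ),(0:ℝ),(1:ℝ)) x = 0 := by
  have hev : (fun y => fderiv ℝ (ZM c₀ c₃ a) y ((0:ℝ),(0:ℝ),(1:ℝ))) =ᶠ[nhds x]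
      MM c₀ c₃ a := by
    filter_upwards [isOpen_S3.mem_nhds hx] with y hy
    exact fderiv_ZM_z hy
  rw [pd2, hev.fderiv_eq, fderiv_MM_z hx]


lemma lap3_ZM {c₀ c₃ : ℂ} {a : ℝ} {x : P3} (hx : x ∈ S3) :
    lap3 (ZM c₀ c₃ a) x = x.2.2 * (4*c₃*((a:ℂ)-1) * pw (a-2) (cw x)).im := by
  rw [lap3]
  rw [show ((1:ℝ),(0:ℝ),(0:ℝ)) = ((1:ℝ),(0:ℝ),(0:ℝ)) from rfl]
  rw [pd2_ZM_x hx, pd2_ZM_y hx, pd2_ZM_z hx]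
  simp only [ZM, MM, MMb]
  rw [add_zero, ← mul_add, ← Complex.add_im]
  congr 2
  rw [show a-1-1 = a-2 by ring]
  push_cast
  ring

lemma pd2_MM_x {c₀ c₃ : ℂ} {a : ℝ} {x : P3} (hx : x ∈ S3) :
    pd2 (MM c₀ c₃ a) ((1:ℝ),(0:ℝ),(0:ℝ)) x =
      MM ((c₀*(a:ℂ)+c₃)*((a-1:ℝ):ℂ) + c₃*((a:ℂ)-1)) ((c₃*((a:ℂ)-1))*(((a-1:ℝ):ℂ)-1)) (a-1-1) x := by
  have hev : (fun y => fderiv ℝ (MM c₀ c₃ a) y ((1:ℝ),(0:ℝ),(0:ℝ))) =ᶠ[nhds x]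
      MM (c₀*(a:ℂ)+c₃) (c₃*((a:ℂ)-1)) (a-1) := by
    filter_upwards [isOpen_S3.mem_nhds hx] with y hy
    exact fderiv_MM_x hy
  rw [pd2, hev.fderiv_eq]
  exact fderiv_MM_x hx

lemma pd2_MM_y {c₀ c₃ : ℂ} {a : ℝ} {x : P3} (hx : x ∈ S3) :
    pd2 (MM c₀ c₃ a) ((0:ℝ),(1:ℝ),(0:ℝ)) x =
      MM (-(((a:ℂ)-1)*(c₀*(a:ℂ) - 2*c₃))) (-(c₃*((a:ℂ)-1)*((a:ℂ)-2))) (a-1-1) x := by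
  have hev : (fun y => fderiv ℝ (MM c₀ c₃ a) y ((0:ℝ),(1:ℝ),(0:ℝ))) =ᶠ[nhds x]
      MM (I*(c₀*(a:ℂ) - c₃)) (I*c₃*((a:ℂ)-1)) (a-1) := by
    filter_upwards [isOpen_S3.mem_nhds hx] with y hy
    exact fderiv_MM_y hy
  rw [pd2, hev.fderiv_eq, fderiv_MM_y hx]
  have e1 : I*((I*(c₀*(a:ℂ) - c₃))*(((a-1:ℝ):ℂ)) - I*c₃*((a:ℂ)-1)) =
      -(((a:ℂ)-1)*(c₀*(a:ℂ) - 2*c₃)) := by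
    push_cast
    linear_combination ((c₀*(a:ℂ) - c₃)*((a:ℂ)-1) - c₃*((a:ℂ)-1)) * Complex.I_mul_I
  have e2 : I*(I*c₃*((a:ℂ)-1))*(((a-1:ℝ):ℂ)-1) = -(c₃*((a:ℂ)-1)*((a:ℂ)-2)) := by
    push_cast
    linear_combination (c₃*((a:ℂ)-1)*((a:ℂ)-2)) * Complex.I_mul_I
  rw [e1, e2]

lemma pd2_MM_z {c₀ c₃ : ℂ} {a : ℝ} {x : P3} (hx : x ∈ S3) :
    pd2 (MM c₀ c₃ a) ((0:ℝ),(0:ℝ),(1:ℝ)) x = 0 := by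
  have hev : (fun y => fderiv ℝ (MM c₀ c₃ a) y ((0:ℝ),(0:ℝ),(1:ℝ))) =ᶠ[nhds x]
      (fun _ => (0:ℝ)) := by
    filter_upwards [isOpen_S3.mem_nhds hx] with y hy
    exact fderiv_MM_z hy
  rw [pd2, hev.fderiv_eq]
  simp

lemma lap3_MM {c₀ c₃ : ℂ} {a : ℝ} {x : P3} (hx : x ∈ S3) :
    lap3 (MM c₀ c₃ a) x = (4*c₃*((a:ℂ)-1) * pw (a-2) (cw x)).im := by
  rw [lap3, pd2_MM_x hx, pd2_MM_y hx, pd2_MM_z hx]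
  simp only [MM, MMb]
  rw [add_zero, ← Complex.add_im]
  congr 1
  rw [show a-1-1 = a-2 by ring]
  push_cast
  ring

def ec (t : ℝ) : ℂ := Complex.exp ((t:ℂ) * I)
def h1c (lam : ℝ) : ℂ := ((-(lam/2) : ℝ) : ℂ) * ec (-om) + ((-(1+lam/2) : ℝ) : ℂ) * ec (-(lam*om))
def g1c (lam : ℝ) : ℂ := ((lam/2 : ℝ) : ℂ) * ec (-(lam*om)) + ((lam/2 : ℝ) : ℂ) * ec om

lemma ec_eq (t : ℝ) : ec t = (Real.cos t : ℝ) + (Real.sin t : ℝ)*I := by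
  rw [ec, Complex.exp_mul_I, Complex.ofReal_cos, Complex.ofReal_sin]

lemma cw_polar (r θ z : ℝ) :
    cw ((r*Real.cos θ : ℝ), (r*Real.sin θ : ℝ), z) = ((r*Real.cos θ : ℝ) + (r*Real.sin θ : ℝ)*I : ℂ) := rfl

lemma pw_polar {r θ : ℝ} (a : ℝ) (hr : 0 < r) (h1 : -(Real.pi/2) < θ) (h2 : θ < 3*Real.pi/2) :
    pw a ((r*Real.cos θ : ℝ) + (r*Real.sin θ : ℝ)*I) =
      ((r ^ a : ℝ) : ℂ) * ((Real.cos (a*θ) : ℝ) + (Real.sin (a*θ) : ℝ)*I) := by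
  rw [pw, lg_polar hr h1 h2]
  rw [show (a:ℂ) * ((Real.log r : ℝ) + (θ:ℝ)*I) = ((a * Real.log r : ℝ) : ℂ) + ((a*θ : ℝ):ℂ)*I by
    push_cast; ring]
  rw [Complex.exp_add, Complex.exp_mul_I, Complex.ofReal_cos, Complex.ofReal_sin,
    ← Complex.ofReal_exp, Real.rpow_def_of_pos hr, mul_comm (Real.log r) a]

lemma conj_polar (r θ : ℝ) :
    (starRingEnd ℂ) ((r*Real.cos θ : ℝ) + (r*Real.sin θ : ℝ)*I : ℂ) =
      ((r*Real.cos θ : ℝ) : ℂ) - ((r*Real.sin θ : ℝ) : ℂ)*I := by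
  rw [map_add, map_mul, Complex.conj_I, Complex.conj_ofReal, Complex.conj_ofReal]; ring

lemma val_u1 {lam r θ z : ℝ} (hr : 0 < r) (h1 : -(Real.pi/2) < θ) (h2 : θ < 3*Real.pi/2) :
    ZM (h1c lam) (g1c lam) lam ((r*Real.cos θ : ℝ), (r*Real.sin θ : ℝ), z) = u1pol lam r θ z := by
  rw [ZM, MM, cw_polar, MMb, pw_polar lam hr h1 h2, pw_polar (lam-1) hr h1 h2, conj_polar,
    u1pol, h1c, g1c, ec_eq, ec_eq, ec_eq]
  have hA : r ^ lam = r * r^(lam-1) := by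
    have h := Real.rpow_add hr 1 (lam-1)
    rw [show (1:ℝ)+(lam-1) = lam by ring, Real.rpow_one] at h
    exact h
  rw [hA]
  simp only [Complex.add_im, Complex.mul_im, Complex.mul_re, Complex.add_re, Complex.sub_re,
    Complex.sub_im, Complex.ofReal_re, Complex.ofReal_im, Complex.I_re, Complex.I_im,
    Complex.neg_im, Complex.neg_re, Complex.one_re, Complex.one_im]
  simp only [mul_sub, sub_mul, add_mul, mul_add, one_mul]
  simp only [Real.sin_add, Real.cos_add, Real.sin_sub, Real.cos_sub, Real.sin_neg, Real.cos_neg]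
  ring_nf
  simp only [Real.sin_sq]
  ring

def h2c (lam : ℝ) : ℂ := ec 0 + ((-(lam/2) : ℝ) : ℂ) * (I * ec (-(lam*om)))
  + ((-(lam/2) : ℝ) : ℂ) * (I * ec (-om))
def g2c (lam : ℝ) : ℂ := ((lam/2 : ℝ) : ℂ) * (I * ec (-(lam*om))) + ((lam/2 : ℝ) : ℂ) * (I * ec om)
def hpc (lam : ℝ) : ℂ := ((2*lam : ℝ) : ℂ) * ec om + ((2*lam : ℝ) : ℂ) * ec (-(lam*om))

lemma val_u2 {lam r θ z : ℝ} (hr : 0 < r) (h1 : -(Real.pi/2) < θ) (h2 : θ < 3*Real.pi/2) :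
    ZM (h2c lam) (g2c lam) lam ((r*Real.cos θ : ℝ), (r*Real.sin θ : ℝ), z) = u2pol lam r θ z := by
  rw [ZM, MM, cw_polar, MMb, pw_polar lam hr h1 h2, pw_polar (lam-1) hr h1 h2, conj_polar,
    u2pol, h2c, g2c, ec_eq, ec_eq, ec_eq, ec_eq]
  have hA : r ^ lam = r * r^(lam-1) := by
    have h := Real.rpow_add hr 1 (lam-1)
    rw [show (1:ℝ)+(lam-1) = lam by ring, Real.rpow_one] at h
    exact h
  rw [hA]
  simp only [Complex.add_im, Complex.mul_im, Complex.mul_re, Complex.add_re, Complex.sub_re,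
    Complex.sub_im, Complex.ofReal_re, Complex.ofReal_im, Complex.I_re, Complex.I_im,
    Complex.neg_im, Complex.neg_re, Complex.one_re, Complex.one_im]
  simp only [mul_sub, sub_mul, add_mul, mul_add, one_mul]
  simp only [Real.sin_add, Real.cos_add, Real.sin_sub, Real.cos_sub, Real.sin_neg, Real.cos_neg,
    Real.sin_zero, Real.cos_zero]
  ring_nf
  simp only [Real.sin_sq]
  ring

lemma val_u3 {r θ z : ℝ} (hr : 0 < r) (h1 : -(Real.pi/2) < θ) (h2 : θ < 3*Real.pi/2) :
    MM 1 0 ((2:ℝ)/3) ((r*Real.cos θ : ℝ), (r*Real.sin θ : ℝ), z) = u3pol r θ := by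
  rw [MM, cw_polar, MMb, pw_polar ((2:ℝ)/3) hr h1 h2, u3pol]
  simp only [Complex.add_im, Complex.mul_im, Complex.mul_re, Complex.add_re,
    Complex.ofReal_re, Complex.ofReal_im, Complex.I_re, Complex.I_im,
    Complex.one_re, Complex.one_im, Complex.zero_re, Complex.zero_im, zero_mul, mul_zero]
  ring

lemma val_p {lam r θ z : ℝ} (hr : 0 < r) (h1 : -(Real.pi/2) < θ) (h2 : θ < 3*Real.pi/2) :
    ZM (hpc lam) 0 (lam-1) ((r*Real.cos θ : ℝ), (r*Real.sin θ : ℝ), z) = ppol lam r θ z := by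
  rw [ZM, MM, cw_polar, MMb, pw_polar (lam-1) hr h1 h2, ppol, Phi, hpc, ec_eq, ec_eq]
  simp only [Complex.add_im, Complex.mul_im, Complex.mul_re, Complex.add_re, Complex.sub_re,
    Complex.sub_im, Complex.ofReal_re, Complex.ofReal_im, Complex.I_re, Complex.I_im,
    Complex.zero_re, Complex.zero_im, zero_mul, mul_zero]
  simp only [mul_sub, sub_mul, add_mul, mul_add, one_mul]
  simp only [Real.sin_add, Real.cos_add, Real.sin_sub, Real.cos_sub, Real.sin_neg, Real.cos_neg]
  ring

lemma pde3 {lam r θ z : ℝ} (hr : 0 < r) (h1 : -(Real.pi/2) < θ) (h2 : θ < 3*Real.pi/2) :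
    MM (hpc lam) 0 (lam-1) ((r*Real.cos θ : ℝ), (r*Real.sin θ : ℝ), z) = f3pol lam r θ := by
  rw [MM, cw_polar, MMb, pw_polar (lam-1) hr h1 h2, f3pol, Phi, hpc, ec_eq, ec_eq]
  simp only [Complex.add_im, Complex.mul_im, Complex.mul_re, Complex.add_re, Complex.sub_re,
    Complex.sub_im, Complex.ofReal_re, Complex.ofReal_im, Complex.I_re, Complex.I_im,
    Complex.zero_re, Complex.zero_im, zero_mul, mul_zero]
  simp only [mul_sub, sub_mul, add_mul, mul_add, one_mul]
  simp only [Real.sin_add, Real.cos_add, Real.sin_sub, Real.cos_sub, Real.sin_neg, Real.cos_neg]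
  ring

lemma pde1 {lam ν r θ z : ℝ} (hr : 0 < r) (h1 : -(Real.pi/2) < θ) (h2 : θ < 3*Real.pi/2) :
    -ν * (z * ((4*(g1c lam)*((lam:ℂ)-1)) * pw (lam-2) ((r*Real.cos θ : ℝ) + (r*Real.sin θ : ℝ)*I)).im)
      + ZM ((hpc lam)*(((lam-1:ℝ)):ℂ) + 0) (0*((((lam-1:ℝ)):ℂ)-1)) (lam-1-1)
        ((r*Real.cos θ : ℝ), (r*Real.sin θ : ℝ), z)
      = f1pol lam ν r θ z := by
  rw [ZM, MM, cw_polar, MMb, show lam-1-1 = lam-2 by ring,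
    pw_polar (lam-2) hr h1 h2, pw_polar (lam-2-1) hr h1 h2, conj_polar,
    f1pol, hpc, g1c, ec_eq, ec_eq]
  simp only [zero_mul, Complex.add_im, Complex.mul_im, Complex.mul_re, Complex.add_re,
    Complex.sub_re, Complex.sub_im, Complex.ofReal_re, Complex.ofReal_im, Complex.I_re,
    Complex.I_im, Complex.zero_re, Complex.zero_im, mul_zero,
    Complex.re_ofNat, Complex.im_ofNat, Complex.one_re, Complex.one_im]
  simp only [mul_sub, sub_mul, add_mul, mul_add, one_mul]
  simp only [Real.sin_add, Real.cos_add, Real.sin_sub, Real.cos_sub, Real.sin_neg, Real.cos_neg]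
  ring

lemma pde2 {lam ν r θ z : ℝ} (hr : 0 < r) (h1 : -(Real.pi/2) < θ) (h2 : θ < 3*Real.pi/2) :
    -ν * (z * ((4*(g2c lam)*((lam:ℂ)-1)) * pw (lam-2) ((r*Real.cos θ : ℝ) + (r*Real.sin θ : ℝ)*I)).im)
      + ZM (I*((hpc lam)*(((lam-1:ℝ)):ℂ) - 0)) (I*0*((((lam-1:ℝ)):ℂ)-1)) (lam-1-1)
        ((r*Real.cos θ : ℝ), (r*Real.sin θ : ℝ), z)
      = f2pol lam ν r θ z := by
  rw [ZM, MM, cw_polar, MMb, show lam-1-1 = lam-2 by ring,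
    pw_polar (lam-2) hr h1 h2, pw_polar (lam-2-1) hr h1 h2, conj_polar,
    f2pol, hpc, g2c, ec_eq, ec_eq]
  simp only [zero_mul, Complex.add_im, Complex.mul_im, Complex.mul_re, Complex.add_re,
    Complex.sub_re, Complex.sub_im, Complex.ofReal_re, Complex.ofReal_im, Complex.I_re,
    Complex.I_im, Complex.zero_re, Complex.zero_im, mul_zero,
    Complex.re_ofNat, Complex.im_ofNat, Complex.one_re, Complex.one_im]
  simp only [mul_sub, sub_mul, add_mul, mul_add, one_mul]
  simp only [Real.sin_add, Real.cos_add, Real.sin_sub, Real.cos_sub, Real.sin_neg, Real.cos_neg]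
  ring

lemma abs_cw_polar {r θ : ℝ} (hr : 0 ≤ r) :
    ‖((r*Real.cos θ : ℝ) + (r*Real.sin θ : ℝ)*I : ℂ)‖ = r := by
  rw [Complex.norm_def, Complex.normSq_add_mul_I]
  rw [show (r*Real.cos θ)^2 + (r*Real.sin θ)^2 = r^2 by
    have := Real.sin_sq_add_cos_sq θ; nlinarith]
  exact Real.sqrt_sq hr

lemma lg_re {w : ℂ} : (lg w).re = Real.log ‖w‖ := by
  rw [lg, Complex.add_re, Complex.log_re]
  simp

lemma cw_eq_polar {q : P3} (hq : q ∈ S3) :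
    q = ((‖cw q‖ * Real.cos ((lg (cw q)).im) : ℝ),
      (‖cw q‖ * Real.sin ((lg (cw q)).im) : ℝ), q.2.2) := by
  have habs : 0 < ‖cw q‖ := by
    simpa using (ne_zero_of_SS hq)
  have hw : cw q = Complex.exp (lg (cw q)) := (exp_lg hq).symm
  have hre : q.1 = (cw q).re := by simp [cw]
  have him : q.2.1 = (cw q).im := by simp [cw]
  refine Prod.ext ?_ (Prod.ext ?_ rfl)
  · rw [hre]; conv_lhs => rw [hw]
    rw [Complex.exp_re, lg_re, Real.exp_log habs]
  · rw [him]; conv_lhs => rw [hw]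
    rw [Complex.exp_im, lg_re, Real.exp_log habs]

def Vset : Set P3 := {q | q ∈ S3 ∧ ‖cw q‖ < 1 ∧ 0 < (lg (cw q)).im ∧
  (lg (cw q)).im < om ∧ 0 < q.2.2 ∧ q.2.2 < 1}

lemma omega_eq_vset : OmegaSet = Vset := by
  have hπ := Real.pi_pos
  ext q
  constructor
  · rintro ⟨r, θ, z, hr0, hr1, hθ0, hθom, hz0, hz1, rfl⟩
    have hθa : -(Real.pi/2) < θ := by linarith
    have hθb : θ < 3*Real.pi/2 := by rw [om] at hθom; linarith
    have hcw : cw ((r * Real.cos θ : ℝ), (r * Real.sin θ : ℝ), z)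
        = ((r*Real.cos θ : ℝ) + (r*Real.sin θ : ℝ)*I : ℂ) := rfl
    refine ⟨?_, ?_, ?_, ?_, hz0, hz1⟩
    · show _ ∈ SS
      rw [hcw]; exact mem_SS_polar hr0 hθa hθb
    · rw [hcw, abs_cw_polar hr0.le]; exact hr1
    · rw [hcw, lg_polar hr0 hθa hθb]; simpa using hθ0
    · rw [hcw, lg_polar hr0 hθa hθb]; simpa using hθom
  · rintro ⟨hS, habs, hθ0, hθom, hz0, hz1⟩
    refine ⟨‖cw q‖, (lg (cw q)).im, q.2.2, ?_, habs, hθ0, hθom, hz0, hz1, ?_⟩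
    · simpa using (ne_zero_of_SS hS)
    · exact cw_eq_polar hS

lemma isOpen_OmegaSet : IsOpen OmegaSet := by
  rw [omega_eq_vset]
  have hV : Vset = S3 ∩ (fun q => (‖cw q‖, (lg (cw q)).im, q.2.2)) ⁻¹'
      ((Set.Iio 1) ×ˢ ((Set.Ioo 0 om) ×ˢ (Set.Ioo 0 1))) := by
    ext q
    simp only [Vset, Set.mem_inter_iff, Set.mem_preimage, Set.mem_prod, Set.mem_Iio,
      Set.mem_Ioo, Set.mem_setOf_eq]
    tauto
  rw [hV]
  have hccw : Continuous cw := by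
    show Continuous (fun q : P3 => (q.1 : ℂ) + (q.2.1 : ℂ) * I)
    fun_prop
  apply ContinuousOn.isOpen_inter_preimage ?_ isOpen_S3
    ((isOpen_Iio).prod ((isOpen_Ioo).prod isOpen_Ioo))
  apply ContinuousOn.prodMk
  · exact (continuous_norm.comp hccw).continuousOn
  · apply ContinuousOn.prodMk
    · apply Complex.continuous_im.comp_continuousOn
      intro q hq
      exact ((hasDerivAt_lg hq).continuousAt.comp_continuousWithinAt
        (hccw.continuousAt.continuousWithinAt))
    · exact (continuous_snd.comp continuous_snd).continuousOn


lemma contDiffAt_pwcw {a : ℝ} {q : P3} (hq : q ∈ S3) :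
    ContDiffAt ℝ 2 (fun y => pw a (cw y)) q := by
  have hcw : ContDiff ℝ 2 cw := by
    have h1 : ContDiff ℝ 2 (fun q : P3 => (q.1 : ℂ)) :=
      Complex.ofRealCLM.contDiff.comp contDiff_fst
    have h2 : ContDiff ℝ 2 (fun q : P3 => (q.2.1 : ℂ)) :=
      Complex.ofRealCLM.contDiff.comp (contDiff_fst.comp contDiff_snd)
    exact h1.add (h2.mul contDiff_const)
  have l1 : ContDiffAt ℂ 2 (fun w : ℂ => -I * w) (cw q) :=
    (contDiff_const.mul contDiff_id).contDiffAt
  have l2 : ContDiffAt ℂ 2 (fun w : ℂ => Complex.log (-I * w)) (cw q) :=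
    (Complex.contDiffAt_log hq).comp (cw q) l1
  have l3 : ContDiffAt ℂ 2 (fun w : ℂ => (a:ℂ) * (Complex.log (-I * w) + I * (Real.pi/2))) (cw q) :=
    contDiffAt_const.mul (l2.add contDiffAt_const)
  have l4 : ContDiffAt ℂ 2 (pw a) (cw q) := by
    have := (Complex.contDiff_exp (n := 2)).contDiffAt.comp (cw q) l3
    exact this
  exact (l4.restrict_scalars ℝ).comp q hcw.contDiffAt

lemma contDiffAt_MM {c₀ c₃ : ℂ} {a : ℝ} {q : P3} (hq : q ∈ S3) :
    ContDiffAt ℝ 2 (MM c₀ c₃ a) q := by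
  have hcw : ContDiff ℝ 2 cw := by
    have h1 : ContDiff ℝ 2 (fun q : P3 => (q.1 : ℂ)) :=
      Complex.ofRealCLM.contDiff.comp contDiff_fst
    have h2 : ContDiff ℝ 2 (fun q : P3 => (q.2.1 : ℂ)) :=
      Complex.ofRealCLM.contDiff.comp (contDiff_fst.comp contDiff_snd)
    exact h1.add (h2.mul contDiff_const)
  have hconj : ContDiffAt ℝ 2 (fun y => (starRingEnd ℂ) (cw y)) q := by
    have : ContDiff ℝ 2 (fun y : P3 => Complex.conjCLE.toContinuousLinearMap (cw y)) :=
      Complex.conjCLE.toContinuousLinearMap.contDiff.comp hcw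
    exact this.contDiffAt
  have hin : ContDiffAt ℝ 2
      (fun y => c₀ * pw a (cw y) + c₃ * (starRingEnd ℂ) (cw y) * pw (a-1) (cw y)) q :=
    (contDiffAt_const.mul (contDiffAt_pwcw hq)).add
      ((contDiffAt_const.mul hconj).mul (contDiffAt_pwcw hq))
  exact Complex.imCLM.contDiff.contDiffAt.comp q hin

lemma contDiffAt_ZM {c₀ c₃ : ℂ} {a : ℝ} {q : P3} (hq : q ∈ S3) :
    ContDiffAt ℝ 2 (ZM c₀ c₃ a) q := by
  have hz : ContDiffAt ℝ 2 (fun y : P3 => y.2.2) q := by fun_prop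
  exact hz.mul (contDiffAt_MM hq)



lemma pd_congr {f g : P3 → ℝ} {v x : P3} (h : f =ᶠ[nhds x] g) : pd f v x = pd g v x := by
  rw [pd, pd, h.fderiv_eq]

lemma pd2_congr {f g : P3 → ℝ} {v x : P3} (h : f =ᶠ[nhds x] g) : pd2 f v x = pd2 g v x := by
  have h2 : (fun y => fderiv ℝ f y v) =ᶠ[nhds x] (fun y => fderiv ℝ g y v) :=
    (h.fderiv (𝕜 := ℝ)).mono (fun y hy => by show (fderiv ℝ f y) v = (fderiv ℝ g y) v; rw [hy])
  rw [pd2, pd2, h2.fderiv_eq]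

lemma lap3_congr {f g : P3 → ℝ} {x : P3} (h : f =ᶠ[nhds x] g) : lap3 f x = lap3 g x := by
  rw [lap3, lap3, pd2_congr h, pd2_congr h, pd2_congr h]


/-- For every `ν > 0`: `u` is twice differentiable and `p` differentiable at every point
of `Ω`, and the Stokes momentum equation `−νΔu + ∇p = f` holds pointwise on `Ω`. -/
theorem stmt5 (lam : ℝ) (hlam0 : 0 < lam) (hlam1 : lam < 1)
    (hlamEq : Real.sin (lam * om) = -lam * Real.sin om)
    (ν : ℝ) (hν : 0 < ν)
    (u : P3 → P3) (p : P3 → ℝ) (f : P3 → P3)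
    (hu : ∀ r θ z : ℝ, 0 < r → r < 1 → 0 < θ → θ < om → 0 < z → z < 1 →
      u (r * Real.cos θ, r * Real.sin θ, z) = (u1pol lam r θ z, u2pol lam r θ z, u3pol r θ))
    (hp : ∀ r θ z : ℝ, 0 < r → r < 1 → 0 < θ → θ < om → 0 < z → z < 1 →
      p (r * Real.cos θ, r * Real.sin θ, z) = ppol lam r θ z)
    (hf : ∀ r θ z : ℝ, 0 < r → r < 1 → 0 < θ → θ < om → 0 < z → z < 1 →
      f (r * Real.cos θ, r * Real.sin θ, z) =
        (f1pol lam ν r θ z, f2pol lam ν r θ z, f3pol lam r θ)) :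
    ∀ x ∈ OmegaSet,
      (DifferentiableAt ℝ u x ∧ DifferentiableAt ℝ (fderiv ℝ u) x) ∧
      DifferentiableAt ℝ p x ∧
      (-ν) • vlap u x + grad3 p x = f x := by
  intro x hx
  obtain ⟨r, θ, z, hr0, hr1, hθ0, hθom, hz0, hz1, rfl⟩ := hx
  have hπ := Real.pi_pos
  have hom : om = 3*Real.pi/2 := rfl
  have hθa : -(Real.pi/2) < θ := by linarith
  have hθb : θ < 3*Real.pi/2 := by rw [hom] at hθom; exact hθom
  have hptS3 : ((r * Real.cos θ, r * Real.sin θ, z) : P3) ∈ S3 :=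
    mem_SS_polar hr0 hθa hθb
  have hptΩ : ((r * Real.cos θ, r * Real.sin θ, z) : P3) ∈ OmegaSet :=
    ⟨r, θ, z, hr0, hr1, hθ0, hθom, hz0, hz1, rfl⟩
  have hUev : u =ᶠ[nhds ((r * Real.cos θ, r * Real.sin θ, z) : P3)]
      (fun y => (ZM (h1c lam) (g1c lam) lam y, ZM (h2c lam) (g2c lam) lam y,
        MM 1 0 ((2:ℝ)/3) y)) := by
    filter_upwards [isOpen_OmegaSet.mem_nhds hptΩ] with y hy
    obtain ⟨r', θ', z', hr0', hr1', hθ0', hθom', hz0', hz1', rfl⟩ := hy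
    have hθa' : -(Real.pi/2) < θ' := by linarith
    have hθb' : θ' < 3*Real.pi/2 := by rw [hom] at hθom'; exact hθom'
    rw [hu r' θ' z' hr0' hr1' hθ0' hθom' hz0' hz1']
    exact Prod.ext (val_u1 hr0' hθa' hθb').symm
      (Prod.ext (val_u2 hr0' hθa' hθb').symm (val_u3 hr0' hθa' hθb').symm)
  have hPev : p =ᶠ[nhds ((r * Real.cos θ, r * Real.sin θ, z) : P3)]
      ZM (hpc lam) 0 (lam-1) := by
    filter_upwards [isOpen_OmegaSet.mem_nhds hptΩ] with y hy
    obtain ⟨r', θ', z', hr0', hr1', hθ0', hθom', hz0', hz1', rfl⟩ := hy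
    have hθa' : -(Real.pi/2) < θ' := by linarith
    have hθb' : θ' < 3*Real.pi/2 := by rw [hom] at hθom'; exact hθom'
    rw [hp r' θ' z' hr0' hr1' hθ0' hθom' hz0' hz1']
    exact (val_p hr0' hθa' hθb').symm
  have hUc2 : ContDiffAt ℝ 2 (fun y => (ZM (h1c lam) (g1c lam) lam y,
      ZM (h2c lam) (g2c lam) lam y, MM 1 0 ((2:ℝ)/3) y))
      ((r * Real.cos θ, r * Real.sin θ, z) : P3) :=
    (contDiffAt_ZM hptS3).prodMk ((contDiffAt_ZM hptS3).prodMk (contDiffAt_MM hptS3))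
  refine ⟨⟨?_, ?_⟩, ?_, ?_⟩
  · exact hUev.differentiableAt_iff.mpr (hUc2.differentiableAt two_ne_zero)
  · refine (hUev.fderiv (𝕜 := ℝ)).differentiableAt_iff.mpr ?_
    exact (hUc2.fderiv_right (m := 1) (le_refl 2)).differentiableAt one_ne_zero
  · exact hPev.differentiableAt_iff.mpr ((contDiffAt_ZM hptS3).differentiableAt two_ne_zero)
  · have h1ev : (fun y => (u y).1) =ᶠ[nhds ((r * Real.cos θ, r * Real.sin θ, z) : P3)]
        ZM (h1c lam) (g1c lam) lam := hUev.mono (fun y hy => by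
          show (u y).1 = _; rw [hy])
    have h2ev : (fun y => (u y).2.1) =ᶠ[nhds ((r * Real.cos θ, r * Real.sin θ, z) : P3)]
        ZM (h2c lam) (g2c lam) lam := hUev.mono (fun y hy => by
          show (u y).2.1 = _; rw [hy])
    have h3ev : (fun y => (u y).2.2) =ᶠ[nhds ((r * Real.cos θ, r * Real.sin θ, z) : P3)]
        MM 1 0 ((2:ℝ)/3) := hUev.mono (fun y hy => by
          show (u y).2.2 = _; rw [hy])
    rw [hf r θ z hr0 hr1 hθ0 hθom hz0 hz1]
    rw [vlap, grad3, lap3_congr h1ev, lap3_congr h2ev, lap3_congr h3ev,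
      pd_congr hPev, pd_congr hPev, pd_congr hPev,
      lap3_ZM hptS3, lap3_ZM hptS3, lap3_MM hptS3]
    simp only [pd]
    rw [fderiv_ZM_x hptS3, fderiv_ZM_y hptS3, fderiv_ZM_z hptS3]
    rw [Prod.ext_iff, Prod.ext_iff]
    refine ⟨?_, ?_, ?_⟩
    · show -ν * _ + _ = _
      exact pde1 hr0 hθa hθb
    · show -ν * _ + _ = _
      exact pde2 hr0 hθa hθb
    · show -ν * _ + _ = _
      simp only [mul_zero, zero_mul, Complex.zero_im, zero_add]
      exact pde3 hr0 hθa hθb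
end
end

section
/- For every ν > 0 with ν ≠ 1, the data function f fails to be square-integrable: ∫_Ω ‖f(x,y,z)‖² d(x,y,z) = ∞, i.e. f ∉ L²(Ω; ℝ³). -/
open MeasureTheory

noncomputable section

/-- Polar representation of a point in the (open) second quadrant. -/
lemma polar_rep (a b : ℝ) (ha : a < 0) (hb : 0 < b) :
    ∃ θ : ℝ, 0 < θ ∧ θ < om ∧
      Real.sqrt (a ^ 2 + b ^ 2) * Real.cos θ = a ∧
      Real.sqrt (a ^ 2 + b ^ 2) * Real.sin θ = b := by
  have hs : (0:ℝ) < a ^ 2 + b ^ 2 := by nlinarith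
  set r := Real.sqrt (a ^ 2 + b ^ 2) with hrdef
  have hr0 : 0 < r := Real.sqrt_pos.mpr hs
  have hr2 : r ^ 2 = a ^ 2 + b ^ 2 := Real.sq_sqrt hs.le
  have habs : -r ≤ a := by nlinarith
  have h1 : -1 ≤ a / r := by
    rw [le_div_iff₀ hr0]; linarith
  have h2 : a / r < 0 := div_neg_of_neg_of_pos ha hr0
  refine ⟨Real.arccos (a / r), ?_, ?_, ?_, ?_⟩
  · exact Real.arccos_pos.mpr (by linarith)
  · have h3 := Real.arccos_le_pi (a / r)
    have hπ : Real.pi < om := by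
      have := Real.pi_pos; unfold om; linarith
    linarith
  · rw [Real.cos_arccos h1 (by linarith)]
    field_simp
  · rw [Real.sin_arccos]
    have h3 : 1 - (a / r) ^ 2 = (b / r) ^ 2 := by
      field_simp
      nlinarith
    rw [h3, Real.sqrt_sq (by positivity)]
    field_simp

/-- Pointwise lower bound for `‖f‖²` on the second-quadrant part of `Ω`. -/
lemma pointwise_ge (lam ν : ℝ) (f : P3 → P3)
    (hf : ∀ r θ z : ℝ, 0 < r → r < 1 → 0 < θ → θ < om → 0 < z → z < 1 →
      f (r * Real.cos θ, r * Real.sin θ, z) =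
        (f1pol lam ν r θ z, f2pol lam ν r θ z, f3pol lam r θ))
    (a b z : ℝ) (ha : a < 0) (hb : 0 < b) (hab : a ^ 2 + b ^ 2 < 1)
    (hz0 : 0 < z) (hz1 : z < 1) :
    (2 * lam * (lam - 1) * (ν - 1)) ^ 2 * z ^ 2 * (a ^ 2 + b ^ 2) ^ (lam - 2) *
      (2 + 2 * Real.cos ((lam + 1) * om)) ≤
    (f (a, b, z)).1 ^ 2 + (f (a, b, z)).2.1 ^ 2 + (f (a, b, z)).2.2 ^ 2 := by
  obtain ⟨θ, hθ0, hθom, hcos, hsin⟩ := polar_rep a b ha hb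
  have hs : (0:ℝ) < a ^ 2 + b ^ 2 := by nlinarith
  set r := Real.sqrt (a ^ 2 + b ^ 2) with hrdef
  have hr0 : 0 < r := Real.sqrt_pos.mpr hs
  have hr2 : r ^ 2 = a ^ 2 + b ^ 2 := Real.sq_sqrt hs.le
  have hrnn := Real.sqrt_nonneg (a ^ 2 + b ^ 2)
  have hr1 : r < 1 := by nlinarith
  have hpt : ((a, b, z) : P3) = (r * Real.cos θ, r * Real.sin θ, z) := by
    rw [hcos, hsin]
  rw [hpt, hf r θ z hr0 hr1 hθ0 hθom hz0 hz1]
  dsimp only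
  set α := lam * om - (lam - 2) * θ with hα
  set β := om + (lam - 2) * θ with hβ
  have hAB : (Real.sin α - Real.sin β) ^ 2 + (Real.cos α + Real.cos β) ^ 2 =
      2 + 2 * Real.cos ((lam + 1) * om) := by
    have h3 : Real.cos ((lam + 1) * om) =
        Real.cos α * Real.cos β - Real.sin α * Real.sin β := by
      rw [show (lam + 1) * om = α + β by rw [hα, hβ]; ring, Real.cos_add]
    have h1 := Real.sin_sq_add_cos_sq α
    have h2 := Real.sin_sq_add_cos_sq β
    nlinarith [h1, h2, h3]
  have hsq : (r ^ (lam - 2)) ^ 2 = (a ^ 2 + b ^ 2) ^ (lam - 2) := by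
    rw [← hr2, ← Real.rpow_natCast (r ^ (lam - 2)) 2, ← Real.rpow_mul hr0.le,
      ← Real.rpow_natCast r 2, ← Real.rpow_mul hr0.le]
    congr 1
    push_cast; ring
  have hexp : f1pol lam ν r θ z ^ 2 + f2pol lam ν r θ z ^ 2 =
      (2 * lam * (lam - 1) * (ν - 1)) ^ 2 * z ^ 2 * (r ^ (lam - 2)) ^ 2 *
        ((Real.sin α - Real.sin β) ^ 2 + (Real.cos α + Real.cos β) ^ 2) := by
    simp only [f1pol, f2pol]
    rw [← hα, ← hβ]
    ring
  rw [hsq, hAB] at hexp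
  rw [← hexp]
  nlinarith [sq_nonneg (f3pol lam r θ)]

set_option maxHeartbeats 1000000 in
/-- For every `ν > 0` with `ν ≠ 1`, the data function `f` fails to be square-integrable:
`∫_Ω ‖f‖² = ∞`, i.e. `f ∉ L²(Ω; ℝ³)`. -/
theorem stmt7 (lam : ℝ) (hlam0 : 0 < lam) (hlam1 : lam < 1)
    (hlamEq : Real.sin (lam * om) = -lam * Real.sin om)
    (ν : ℝ) (hν : 0 < ν) (hν1 : ν ≠ 1)
    (f : P3 → P3)
    (hf : ∀ r θ z : ℝ, 0 < r → r < 1 → 0 < θ → θ < om → 0 < z → z < 1 →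
      f (r * Real.cos θ, r * Real.sin θ, z) =
        (f1pol lam ν r θ z, f2pol lam ν r θ z, f3pol lam r θ)) :
    ∫⁻ x in OmegaSet,
      ENNReal.ofReal ((f x).1 ^ 2 + (f x).2.1 ^ 2 + (f x).2.2 ^ 2) = ⊤ := by
  have hπ := Real.pi_pos
  have hDne : 2 * lam * (lam - 1) * (ν - 1) ≠ 0 := by
    have h1 : lam - 1 ≠ 0 := by intro h; linarith
    have h2 : ν - 1 ≠ 0 := sub_ne_zero.mpr hν1
    have h0 : (2:ℝ) * lam ≠ 0 := by positivity
    exact mul_ne_zero (mul_ne_zero h0 h1) h2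
  have hD2 : 0 < (2 * lam * (lam - 1) * (ν - 1)) ^ 2 := pow_two_pos_of_ne_zero hDne
  have hKpos : 0 < 2 + 2 * Real.cos ((lam + 1) * om) := by
    have ht : (lam + 1) * om = 2 * ((lam + 1) * om / 2) := by ring
    have hc := Real.cos_two_mul ((lam + 1) * om / 2)
    have hneg : Real.cos ((lam + 1) * om / 2) < 0 := by
      apply Real.cos_neg_of_pi_div_two_lt_of_lt
      · unfold om; nlinarith
      · unfold om; nlinarith
    rw [ht, hc]
    nlinarith
  have h2pow : (0:ℝ) < (2:ℝ) ^ (lam - 2) := Real.rpow_pos_of_pos (by norm_num) _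
  have hC0pos : 0 < (2 * lam * (lam - 1) * (ν - 1)) ^ 2 *
      (2 + 2 * Real.cos ((lam + 1) * om)) * (2:ℝ) ^ (lam - 2) / 8 := by positivity
  rw [eq_top_iff]
  have key : ∀ n : ℕ,
      ENNReal.ofReal ((2 * lam * (lam - 1) * (ν - 1)) ^ 2 *
        (2 + 2 * Real.cos ((lam + 1) * om)) * (2:ℝ) ^ (lam - 2) / 8 *
        ((n:ℝ) + 2) ^ (2 - 2 * lam)) ≤
      ∫⁻ x in OmegaSet,
        ENNReal.ofReal ((f x).1 ^ 2 + (f x).2.1 ^ 2 + (f x).2.2 ^ 2) := by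
    intro n
    have hq : (0:ℝ) < (n:ℝ) + 2 := by positivity
    set ε : ℝ := 1 / ((n:ℝ) + 2) with hε
    have hε0 : 0 < ε := by positivity
    have hεhalf : ε ≤ 1 / 2 := by
      rw [hε, div_le_div_iff₀ hq (by norm_num)]
      have : (0:ℝ) ≤ (n:ℝ) := Nat.cast_nonneg n
      linarith
    set B : Set P3 := Set.Ioo (-ε) 0 ×ˢ Set.Ioo 0 ε ×ˢ Set.Ioo (1/2 : ℝ) 1 with hB
    have hBmeas : MeasurableSet B :=
      measurableSet_Ioo.prod (measurableSet_Ioo.prod measurableSet_Ioo)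
    have hBsub : B ⊆ OmegaSet := by
      rintro ⟨a, b, z⟩ ⟨⟨ha1, ha2⟩, ⟨hb1, hb2⟩, ⟨hz1, hz2⟩⟩
      obtain ⟨θ, hθ0, hθom, hcos, hsin⟩ := polar_rep a b ha2 hb1
      have hs : (0:ℝ) < a ^ 2 + b ^ 2 := by nlinarith
      have hab1 : a ^ 2 + b ^ 2 < 1 := by nlinarith
      refine ⟨Real.sqrt (a ^ 2 + b ^ 2), θ, z, Real.sqrt_pos.mpr hs, ?_, hθ0, hθom,
        by linarith, hz2, by rw [hcos, hsin]⟩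
      have hr2 : Real.sqrt (a ^ 2 + b ^ 2) ^ 2 = a ^ 2 + b ^ 2 := Real.sq_sqrt hs.le
      nlinarith [Real.sqrt_nonneg (a ^ 2 + b ^ 2)]
    have hmpos : 0 < (2 * lam * (lam - 1) * (ν - 1)) ^ 2 *
        (2 + 2 * Real.cos ((lam + 1) * om)) * (2 * ε ^ 2) ^ (lam - 2) / 4 := by
      have h1 : (0:ℝ) < (2 * ε ^ 2) ^ (lam - 2) :=
        Real.rpow_pos_of_pos (by positivity) _
      positivity
    have hbound : ∀ x ∈ B,
        ENNReal.ofReal ((2 * lam * (lam - 1) * (ν - 1)) ^ 2 *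
          (2 + 2 * Real.cos ((lam + 1) * om)) * (2 * ε ^ 2) ^ (lam - 2) / 4) ≤
        ENNReal.ofReal ((f x).1 ^ 2 + (f x).2.1 ^ 2 + (f x).2.2 ^ 2) := by
      rintro ⟨a, b, z⟩ ⟨⟨ha1, ha2⟩, ⟨hb1, hb2⟩, ⟨hz1, hz2⟩⟩
      apply ENNReal.ofReal_le_ofReal
      have hab1 : a ^ 2 + b ^ 2 < 1 := by nlinarith
      have hpw := pointwise_ge lam ν f hf a b z ha2 hb1 hab1 (by linarith) hz2
      have hsle : a ^ 2 + b ^ 2 ≤ 2 * ε ^ 2 := by nlinarith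
      have hspos : (0:ℝ) < a ^ 2 + b ^ 2 := by nlinarith
      have hrp : (2 * ε ^ 2) ^ (lam - 2) ≤ (a ^ 2 + b ^ 2) ^ (lam - 2) :=
        Real.rpow_le_rpow_of_nonpos hspos hsle (by linarith)
      have hz4 : (1:ℝ) / 4 ≤ z ^ 2 := by nlinarith
      refine le_trans ?_ hpw
      have h4 : (2 * lam * (lam - 1) * (ν - 1)) ^ 2 *
          (2 + 2 * Real.cos ((lam + 1) * om)) * ((2 * ε ^ 2) ^ (lam - 2)) ≤
          (2 * lam * (lam - 1) * (ν - 1)) ^ 2 *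
          (2 + 2 * Real.cos ((lam + 1) * om)) * ((a ^ 2 + b ^ 2) ^ (lam - 2)) :=
        mul_le_mul_of_nonneg_left hrp (by positivity)
      have h5 : (2 * lam * (lam - 1) * (ν - 1)) ^ 2 *
          (2 + 2 * Real.cos ((lam + 1) * om)) * ((a ^ 2 + b ^ 2) ^ (lam - 2)) * (1/4) ≤
          (2 * lam * (lam - 1) * (ν - 1)) ^ 2 *
          (2 + 2 * Real.cos ((lam + 1) * om)) * ((a ^ 2 + b ^ 2) ^ (lam - 2)) * (z ^ 2) := by
        apply mul_le_mul_of_nonneg_left hz4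
        have h6 : (0:ℝ) < (a ^ 2 + b ^ 2) ^ (lam - 2) := Real.rpow_pos_of_pos hspos _
        positivity
      nlinarith [h4, h5]
    have hvol : volume B = ENNReal.ofReal (ε * (ε * (1/2))) := by
      rw [hB, Measure.volume_eq_prod, Measure.prod_prod,
        Measure.volume_eq_prod, Measure.prod_prod,
        Real.volume_Ioo, Real.volume_Ioo, Real.volume_Ioo,
        ENNReal.ofReal_mul hε0.le, ENNReal.ofReal_mul hε0.le]
      norm_num
    have hstep : ENNReal.ofReal ((2 * lam * (lam - 1) * (ν - 1)) ^ 2 *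
          (2 + 2 * Real.cos ((lam + 1) * om)) * (2 * ε ^ 2) ^ (lam - 2) / 4) * volume B ≤
        ∫⁻ x in B, ENNReal.ofReal ((f x).1 ^ 2 + (f x).2.1 ^ 2 + (f x).2.2 ^ 2) := by
      rw [← setLIntegral_const B _]
      exact lintegral_mono_ae (ae_restrict_of_forall_mem hBmeas hbound)
    -- identify the constant with the claimed lower bound
    have e3 : ε ^ (2*lam-2 : ℝ) = ((n:ℝ)+2) ^ (2-2*lam) := by
      rw [hε, one_div, Real.inv_rpow hq.le, ← Real.rpow_neg hq.le]
      norm_num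
    have e1 : (2*ε^2)^(lam-2) = (2:ℝ)^(lam-2) * ε^(2*lam-4) := by
      rw [Real.mul_rpow (by norm_num) (by positivity)]
      congr 1
      rw [← Real.rpow_natCast ε 2, ← Real.rpow_mul hε0.le]
      congr 1
      push_cast; ring
    have e2 : (ε:ℝ)^(2*lam-4) * ε^2 = ε^(2*lam-2) := by
      rw [← Real.rpow_natCast ε 2, ← Real.rpow_add hε0]
      congr 1
      push_cast; ring
    have hfinal : (2 * lam * (lam - 1) * (ν - 1)) ^ 2 *
        (2 + 2 * Real.cos ((lam + 1) * om)) * (2:ℝ) ^ (lam - 2) / 8 *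
        ((n:ℝ) + 2) ^ (2 - 2 * lam) =
        (2 * lam * (lam - 1) * (ν - 1)) ^ 2 *
        (2 + 2 * Real.cos ((lam + 1) * om)) * (2 * ε ^ 2) ^ (lam - 2) / 4 *
        (ε * (ε * (1/2))) := by
      rw [← e3, ← e2, e1]
      ring
    calc ENNReal.ofReal ((2 * lam * (lam - 1) * (ν - 1)) ^ 2 *
          (2 + 2 * Real.cos ((lam + 1) * om)) * (2:ℝ) ^ (lam - 2) / 8 *
          ((n:ℝ) + 2) ^ (2 - 2 * lam))
        = ENNReal.ofReal ((2 * lam * (lam - 1) * (ν - 1)) ^ 2 *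
          (2 + 2 * Real.cos ((lam + 1) * om)) * (2 * ε ^ 2) ^ (lam - 2) / 4) * volume B := by
          rw [hfinal, hvol, ← ENNReal.ofReal_mul hmpos.le]
      _ ≤ ∫⁻ x in B, ENNReal.ofReal ((f x).1 ^ 2 + (f x).2.1 ^ 2 + (f x).2.2 ^ 2) := hstep
      _ ≤ _ := lintegral_mono_set hBsub
  -- pass to the limit
  have h1 : Filter.Tendsto (fun n : ℕ => ((n:ℝ) + 2)) Filter.atTop Filter.atTop :=
    Filter.tendsto_atTop_add_const_right _ 2 tendsto_natCast_atTop_atTop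
  have h2 : Filter.Tendsto (fun n : ℕ => ((n:ℝ) + 2) ^ (2 - 2 * lam))
      Filter.atTop Filter.atTop :=
    (tendsto_rpow_atTop (by linarith)).comp h1
  have h3 : Filter.Tendsto (fun n : ℕ =>
      (2 * lam * (lam - 1) * (ν - 1)) ^ 2 *
        (2 + 2 * Real.cos ((lam + 1) * om)) * (2:ℝ) ^ (lam - 2) / 8 *
        ((n:ℝ) + 2) ^ (2 - 2 * lam)) Filter.atTop Filter.atTop :=
    h2.const_mul_atTop hC0pos
  have h4 : Filter.Tendsto (fun n : ℕ =>
      ENNReal.ofReal ((2 * lam * (lam - 1) * (ν - 1)) ^ 2 *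
        (2 + 2 * Real.cos ((lam + 1) * om)) * (2:ℝ) ^ (lam - 2) / 8 *
        ((n:ℝ) + 2) ^ (2 - 2 * lam))) Filter.atTop (nhds ⊤) :=
    ENNReal.tendsto_ofReal_atTop.comp h3
  exact le_of_tendsto' h4 key
end
end

section
/- p is twice differentiable on Ω and harmonic: Δp = ∂²p/∂x² + ∂²p/∂y² + ∂²p/∂z² = 0 at every point of Ω. -/
open MeasureTheory

noncomputable section

open Complex

lemma sin_om : Real.sin om = -1 := by
  have : om = Real.pi + Real.pi / 2 := by unfold om; ring
  rw [this, Real.sin_add]; simp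

lemma cos_om : Real.cos om = 0 := by
  have : om = Real.pi + Real.pi / 2 := by unfold om; ring
  rw [this, Real.cos_add]; simp

def cRot : ℂ := Complex.exp ((-(om/2) : ℝ) * Complex.I)

lemma cRot_ne : cRot ≠ 0 := Complex.exp_ne_zero _

def Acoef (lam : ℝ) : ℝ := -(2*lam*(1 + Real.sin (lam*om)))
def Bcoef (lam : ℝ) : ℝ := -(2*lam*Real.cos (lam*om))

lemma Phi_eq (lam θ : ℝ) :
    Phi lam θ = Acoef lam * Real.cos ((lam-1)*θ) - Bcoef lam * Real.sin ((lam-1)*θ) := by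
  unfold Phi Acoef Bcoef
  rw [Real.sin_add, Real.sin_sub, sin_om, cos_om]
  ring

def kC (lam : ℝ) : ℂ :=
  ((Acoef lam : ℂ) + (Bcoef lam : ℂ) * Complex.I) *
    Complex.exp (((lam-1)*(om/2) : ℝ) * Complex.I)

def GC (lam : ℝ) (w : ℂ) : ℂ := kC lam * Complex.exp (((lam:ℂ)-1) * Complex.log (w * cRot))
def GC1 (lam : ℝ) (w : ℂ) : ℂ := ((lam:ℂ)-1) * GC lam w / w
def GC2 (lam : ℝ) (w : ℂ) : ℂ := ((lam:ℂ)-1) * (((lam:ℂ)-1)-1) * GC lam w / w^2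

def LCmap : P3 →L[ℝ] ℂ :=
  Complex.ofRealCLM.comp (ContinuousLinearMap.fst ℝ ℝ (ℝ × ℝ)) +
    Complex.I • Complex.ofRealCLM.comp
      ((ContinuousLinearMap.fst ℝ ℝ ℝ).comp (ContinuousLinearMap.snd ℝ ℝ (ℝ × ℝ)))

lemma LCmap_apply (v : P3) : LCmap v = (v.1 : ℂ) + (v.2.1 : ℂ) * Complex.I := by
  simp [LCmap, mul_comm]

def ZC : P3 →L[ℝ] ℝ := (ContinuousLinearMap.snd ℝ ℝ ℝ).comp (ContinuousLinearMap.snd ℝ ℝ (ℝ × ℝ))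

lemma ZC_apply (v : P3) : ZC v = v.2.2 := rfl

def gfun (lam : ℝ) (v : P3) : ℝ := v.2.2 * (GC lam (LCmap v)).re

lemma hasDerivAt_GC (lam : ℝ) {w : ℂ} (hw : w * cRot ∈ Complex.slitPlane) :
    HasDerivAt (GC lam) (GC1 lam w) w := by
  have hw0 : w ≠ 0 := by
    intro h; exact Complex.slitPlane_ne_zero hw (by simp [h])
  have h1 : HasDerivAt (fun w : ℂ => w * cRot) cRot w := by
    simpa using (hasDerivAt_id w).mul_const cRot
  have h2 : HasDerivAt Complex.log (w*cRot)⁻¹ (w*cRot) := Complex.hasDerivAt_log hw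
  have h3 : HasDerivAt (fun w : ℂ => Complex.log (w * cRot)) ((w*cRot)⁻¹ * cRot) w := by
    have := h2.comp w h1; exact this
  have h4 := (h3.const_mul ((lam:ℂ)-1)).cexp
  have h5 := h4.const_mul (kC lam)
  have key : (w*cRot)⁻¹ * cRot = w⁻¹ := by
    rw [mul_inv, mul_assoc, inv_mul_cancel₀ cRot_ne, mul_one]
  refine HasDerivAt.congr_deriv h5 ?_
  rw [key]
  unfold GC1 GC
  field_simp

lemma hasDerivAt_GC1 (lam : ℝ) {w : ℂ} (hw : w * cRot ∈ Complex.slitPlane) :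
    HasDerivAt (GC1 lam) (GC2 lam w) w := by
  have hw0 : w ≠ 0 := by
    intro h; exact Complex.slitPlane_ne_zero hw (by simp [h])
  have h1 := ((hasDerivAt_GC lam hw).const_mul ((lam:ℂ)-1)).div (hasDerivAt_id w) hw0
  refine HasDerivAt.congr_deriv h1 ?_
  unfold GC2 GC1
  simp only [id]
  field_simp

def RE (c₁ : ℂ) : P3 →L[ℝ] ℝ :=
  Complex.reCLM.comp ((((1 : ℂ →L[ℂ] ℂ).smulRight c₁).restrictScalars ℝ).comp LCmap)

lemma RE_apply (c₁ : ℂ) (e : P3) : RE c₁ e = (LCmap e * c₁).re := by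
  simp [RE, smul_eq_mul]

def DD (c₀ : ℝ) (c₁ : ℂ) (z : ℝ) : P3 →L[ℝ] ℝ := z • RE c₁ + c₀ • ZC

lemma DD_apply (c₀ : ℝ) (c₁ : ℂ) (z : ℝ) (e : P3) :
    DD c₀ c₁ z e = z * (LCmap e * c₁).re + c₀ * e.2.2 := by
  simp [DD, RE_apply, ZC_apply]

lemma hasFDerivAt_RE {F : ℂ → ℂ} {F' : ℂ} {x : P3} (hF : HasDerivAt F F' (LCmap x)) :
    HasFDerivAt (fun v : P3 => (F (LCmap v)).re) (RE F') x :=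
  Complex.reCLM.hasFDerivAt.comp x ((hF.hasFDerivAt.restrictScalars ℝ).comp x LCmap.hasFDerivAt)

lemma hasFDerivAt_DD {F : ℂ → ℂ} {F' : ℂ} {x : P3} (hF : HasDerivAt F F' (LCmap x)) :
    HasFDerivAt (fun v : P3 => v.2.2 * (F (LCmap v)).re) (DD (F (LCmap x)).re F' x.2.2) x := by
  have h3 : HasFDerivAt (fun v : P3 => v.2.2) ZC x := ZC.hasFDerivAt
  exact h3.mul (hasFDerivAt_RE hF)

lemma LCmap_polar (r θ z : ℝ) :
    LCmap (r * Real.cos θ, r * Real.sin θ, z) = (r:ℂ) * Complex.exp ((θ:ℝ) * Complex.I) := by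
  rw [LCmap_apply, Complex.exp_mul_I]
  push_cast
  ring

lemma exp_log_decomp {r θ : ℝ} (hr : 0 < r) :
    (r:ℂ) * Complex.exp ((θ:ℝ) * Complex.I) * cRot
      = Complex.exp ((Real.log r : ℝ) + ((θ - om/2 : ℝ)) * Complex.I) := by
  rw [Complex.exp_add, ← Complex.ofReal_exp, Real.exp_log hr, cRot, mul_assoc, ← Complex.exp_add]
  congr 2
  push_cast
  ring

lemma GC_polar (lam : ℝ) {r θ : ℝ} (hr : 0 < r) (h1 : -Real.pi < θ - om/2)
    (h2 : θ - om/2 ≤ Real.pi) :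
    GC lam ((r:ℂ) * Complex.exp ((θ:ℝ) * Complex.I)) =
      ((r ^ (lam-1) : ℝ) : ℂ) * (((Acoef lam : ℂ) + (Bcoef lam : ℂ) * Complex.I)
        * Complex.exp ((((lam-1)*θ : ℝ)) * Complex.I)) := by
  have hlog : Complex.log ((r:ℂ) * Complex.exp ((θ:ℝ) * Complex.I) * cRot)
      = (Real.log r : ℝ) + ((θ - om/2 : ℝ)) * Complex.I := by
    rw [exp_log_decomp hr, Complex.log_exp] <;> simp [h1, h2]
  unfold GC
  rw [hlog]
  have e1 : ((lam:ℂ)-1) * ((Real.log r : ℝ) + ((θ - om/2 : ℝ)) * Complex.I)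
      = ((((lam-1) * Real.log r : ℝ)) : ℂ) + (((lam-1)*(θ - om/2) : ℝ)) * Complex.I := by
    push_cast; ring
  rw [e1, Complex.exp_add]
  have e2 : Complex.exp ((((lam-1) * Real.log r : ℝ)) : ℂ) = ((r ^ (lam-1) : ℝ) : ℂ) := by
    rw [← Complex.ofReal_exp, Real.rpow_def_of_pos hr, mul_comm]
  rw [e2]
  unfold kC
  have e4 : Complex.exp ((((lam-1)*(om/2) : ℝ) : ℂ) * Complex.I)
        * Complex.exp ((((lam-1)*(θ - om/2) : ℝ) : ℂ) * Complex.I)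
      = Complex.exp ((((lam-1)*θ : ℝ) : ℂ) * Complex.I) := by
    rw [← Complex.exp_add]
    congr 1
    push_cast
    ring
  rw [← e4]
  ring

lemma om_def : om = 3 * Real.pi / 2 := rfl

lemma gfun_polar (lam : ℝ) {r θ : ℝ} (z : ℝ) (hr : 0 < r) (hθ1 : 0 < θ) (hθ2 : θ < om) :
    gfun lam (r * Real.cos θ, r * Real.sin θ, z) = ppol lam r θ z := by
  have hpi := Real.pi_pos
  have hθ2' : θ < 3 * Real.pi / 2 := hθ2
  have h1 : -Real.pi < θ - om/2 := by rw [om_def]; nlinarith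
  have h2 : θ - om/2 ≤ Real.pi := by rw [om_def]; nlinarith
  unfold gfun
  rw [LCmap_polar, GC_polar lam hr h1 h2]
  set A := Acoef lam
  set B := Bcoef lam
  set u := (lam-1)*θ with hu
  have e5 : ((A : ℂ) + (B : ℂ) * Complex.I) * Complex.exp (((u : ℝ)) * Complex.I)
      = (((A * Real.cos u - B * Real.sin u : ℝ)) : ℂ)
        + (((A * Real.sin u + B * Real.cos u : ℝ)) : ℂ) * Complex.I := by
    rw [Complex.exp_mul_I, ← Complex.ofReal_cos, ← Complex.ofReal_sin]
    push_cast
    ring_nf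
    rw [Complex.I_sq]
    ring
  rw [e5]
  have e6 : ((((r ^ (lam-1) : ℝ)) : ℂ) * ((((A * Real.cos u - B * Real.sin u : ℝ)) : ℂ)
        + (((A * Real.sin u + B * Real.cos u : ℝ)) : ℂ) * Complex.I)).re
      = r ^ (lam-1) * (A * Real.cos u - B * Real.sin u) := by
    simp [Complex.cos_ofReal_re, Complex.sin_ofReal_re]
  rw [e6]
  unfold ppol
  rw [Phi_eq]
  ring

lemma w_polar (r θ z : ℝ) :
    LCmap (r * Real.cos θ, r * Real.sin θ, z) * cRot
      = (r:ℂ) * (Complex.cos ((θ - om/2 : ℝ)) + Complex.sin ((θ - om/2 : ℝ)) * Complex.I) := by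
  rw [LCmap_polar, cRot, mul_assoc, ← Complex.exp_add]
  have e : ((θ:ℂ) * Complex.I + ((-(om/2) : ℝ)) * Complex.I) = ((θ - om/2 : ℝ) : ℂ) * Complex.I := by
    push_cast; ring
  rw [e, Complex.exp_mul_I]

lemma mem_facts {x : P3} (hx : x ∈ OmegaSet) :
    LCmap x * cRot ∈ Complex.slitPlane ∧ 0 < ‖LCmap x * cRot‖ ∧
    ‖LCmap x * cRot‖ < 1 ∧ |(LCmap x * cRot).arg| < 3*Real.pi/4 ∧
    0 < x.2.2 ∧ x.2.2 < 1 := by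
  obtain ⟨r, θ, z, hr0, hr1, hθ0, hθ1, hz0, hz1, hxeq⟩ := hx
  subst hxeq
  have hpi := Real.pi_pos
  have hθ1' : θ < 3 * Real.pi / 2 := hθ1
  rw [w_polar]
  have hmem : θ - om/2 ∈ Set.Ioc (-Real.pi) Real.pi := by
    constructor
    · rw [om_def]; nlinarith
    · rw [om_def]; nlinarith
  have harg : ((r:ℂ) * (Complex.cos ((θ - om/2 : ℝ)) + Complex.sin ((θ - om/2 : ℝ)) * Complex.I)).arg
      = θ - om/2 := Complex.arg_mul_cos_add_sin_mul_I hr0 hmem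
  have habs : ‖(r:ℂ) * (Complex.cos ((θ - om/2 : ℝ)) + Complex.sin ((θ - om/2 : ℝ)) * Complex.I)‖ = r := by
    rw [norm_mul, Complex.norm_cos_add_sin_mul_I, Complex.norm_real, Real.norm_eq_abs, abs_of_pos hr0, mul_one]
  have hlt : |θ - om/2| < 3*Real.pi/4 := by
    rw [abs_lt]
    constructor
    · rw [om_def]; nlinarith
    · rw [om_def]; nlinarith
  refine ⟨?_, by rw [habs]; exact hr0, by rw [habs]; exact hr1, by rw [harg]; exact hlt, hz0, hz1⟩
  rw [Complex.mem_slitPlane_iff_arg]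
  constructor
  · rw [harg]
    intro h
    rw [h] at hlt
    rw [abs_of_pos hpi] at hlt
    nlinarith
  · intro h
    rw [h] at habs
    simp at habs
    linarith [habs.symm ▸ hr0]

lemma cond_mem {v : P3} (h1 : 0 < ‖LCmap v * cRot‖)
    (h2 : ‖LCmap v * cRot‖ < 1)
    (h3 : |(LCmap v * cRot).arg| < 3*Real.pi/4)
    (h4 : 0 < v.2.2) (h5 : v.2.2 < 1) : v ∈ OmegaSet := by
  set w := LCmap v * cRot with hwdef
  have hpi := Real.pi_pos
  obtain ⟨hm, hM⟩ := abs_lt.mp h3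
  refine ⟨‖w‖, w.arg + om/2, v.2.2, h1, h2, ?_, ?_, h4, h5, ?_⟩
  · rw [om_def]; nlinarith
  · rw [om_def]; nlinarith
  · have hw : (‖w‖ : ℂ) * Complex.exp ((w.arg : ℝ) * Complex.I) = w :=
      Complex.norm_mul_exp_arg_mul_I w
    have hstep : LCmap v = w * cRot⁻¹ := by
      rw [hwdef, mul_assoc, mul_inv_cancel₀ cRot_ne, mul_one]
    have hLC : LCmap v = (‖w‖ : ℂ)
        * Complex.exp (((w.arg + om/2 : ℝ)) * Complex.I) := by
      rw [hstep]
      conv_lhs => rw [← hw]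
      rw [cRot, ← Complex.exp_neg, mul_assoc, ← Complex.exp_add]
      congr 2
      push_cast
      ring
    rw [Complex.exp_mul_I, ← Complex.ofReal_cos, ← Complex.ofReal_sin, LCmap_apply] at hLC
    have hLC2 : (v.1 : ℂ) + (v.2.1 : ℂ) * Complex.I
        = ((‖w‖ * Real.cos (w.arg + om/2) : ℝ) : ℂ)
          + ((‖w‖ * Real.sin (w.arg + om/2) : ℝ) : ℂ) * Complex.I := by
      rw [hLC]; push_cast; ring
    rw [Complex.ext_iff] at hLC2
    simp only [Complex.add_re, Complex.add_im, Complex.mul_re, Complex.mul_im,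
      Complex.ofReal_re, Complex.ofReal_im, Complex.I_re, Complex.I_im, mul_zero, zero_mul,
      mul_one, sub_zero, add_zero, zero_add, zero_sub, neg_zero, neg_neg] at hLC2
    exact Prod.ext hLC2.1 (Prod.ext hLC2.2 rfl)

lemma eventually_mem {x : P3} (hx : x ∈ OmegaSet) :
    ∀ᶠ v in nhds x, v ∈ OmegaSet ∧ LCmap v * cRot ∈ Complex.slitPlane := by
  obtain ⟨hslit, habs0, habs1, harg, hz0, hz1⟩ := mem_facts hx
  have hcw : ContinuousAt (fun v : P3 => LCmap v * cRot) x :=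
    (LCmap.continuous.mul continuous_const).continuousAt
  have hev_slit : ∀ᶠ v in nhds x, LCmap v * cRot ∈ Complex.slitPlane :=
    hcw.eventually_mem (Complex.isOpen_slitPlane.mem_nhds hslit)
  have habs_cont : ContinuousAt (fun v : P3 => ‖LCmap v * cRot‖) x :=
    continuous_norm.continuousAt.comp hcw
  have hev_abs : ∀ᶠ v in nhds x, ‖LCmap v * cRot‖ ∈ Set.Ioo 0 1 :=
    habs_cont.eventually_mem (isOpen_Ioo.mem_nhds ⟨habs0, habs1⟩)
  have harg_cont : ContinuousAt (fun v : P3 => |(LCmap v * cRot).arg|) x := by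
    apply ContinuousAt.abs
    show ContinuousAt (Complex.arg ∘ (fun v : P3 => LCmap v * cRot)) x
    exact ContinuousAt.comp (Complex.continuousAt_arg hslit) hcw
  have hev_arg : ∀ᶠ v in nhds x, |(LCmap v * cRot).arg| ∈ Set.Iio (3*Real.pi/4) :=
    harg_cont.eventually_mem (isOpen_Iio.mem_nhds harg)
  have hz_cont : ContinuousAt (fun v : P3 => v.2.2) x :=
    (continuous_snd.comp continuous_snd).continuousAt
  have hev_z : ∀ᶠ v in nhds x, v.2.2 ∈ Set.Ioo (0:ℝ) 1 :=
    hz_cont.eventually_mem (isOpen_Ioo.mem_nhds ⟨hz0, hz1⟩)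
  filter_upwards [hev_slit, hev_abs, hev_arg, hev_z] with v h1 h2 h3 h4
  exact ⟨cond_mem h2.1 h2.2 h3 h4.1 h4.2, h1⟩

lemma contDiffAt_gfun (lam : ℝ) {x : P3} (hx : LCmap x * cRot ∈ Complex.slitPlane) :
    ContDiffAt ℝ 2 (gfun lam) x := by
  have h1 : ContDiffAt ℂ 2 (fun w : ℂ => w * cRot) (LCmap x) := contDiffAt_id.mul contDiffAt_const
  have h2 : ContDiffAt ℂ 2 (fun w : ℂ => Complex.log (w * cRot)) (LCmap x) :=
    by have := ContDiffAt.comp (LCmap x) (Complex.contDiffAt_log hx) h1; exact this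
  have h3 : ContDiffAt ℂ 2 (fun w : ℂ => ((lam:ℂ)-1) * Complex.log (w * cRot)) (LCmap x) :=
    contDiffAt_const.mul h2
  have h4 : ContDiffAt ℂ 2 (fun w : ℂ => Complex.exp (((lam:ℂ)-1) * Complex.log (w * cRot)))
      (LCmap x) := h3.cexp
  have h5 : ContDiffAt ℂ 2 (GC lam) (LCmap x) := contDiffAt_const.mul h4
  have h6' := ContDiffAt.comp x (h5.restrict_scalars ℝ) LCmap.contDiff.contDiffAt
  have h6 : ContDiffAt ℝ 2 (fun v : P3 => GC lam (LCmap v)) x := h6'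
  have h7' := ContDiffAt.comp x (Complex.reCLM.contDiff.contDiffAt (x := GC lam (LCmap x))) h6
  have h7 : ContDiffAt ℝ 2 (fun v : P3 => (GC lam (LCmap v)).re) x := h7' 
  have h8 : ContDiffAt ℝ 2 (fun v : P3 => v.2.2) x := (contDiff_snd.comp contDiff_snd).contDiffAt
  exact h8.mul h7

lemma lap3_gfun (lam : ℝ) {x : P3} (hx : LCmap x * cRot ∈ Complex.slitPlane) :
    lap3 (gfun lam) x = 0 := by
  have hU : ∀ᶠ v in nhds x, LCmap v * cRot ∈ Complex.slitPlane :=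
    ((LCmap.continuous.mul continuous_const).continuousAt).eventually_mem
      (Complex.isOpen_slitPlane.mem_nhds hx)
  have hfd : ∀ v : P3, LCmap v * cRot ∈ Complex.slitPlane →
      fderiv ℝ (gfun lam) v = DD (GC lam (LCmap v)).re (GC1 lam (LCmap v)) v.2.2 := fun v hv =>
    (hasFDerivAt_DD (hasDerivAt_GC lam hv)).fderiv
  have hL1 : LCmap ((1:ℝ),(0:ℝ),(0:ℝ)) = 1 := by rw [LCmap_apply]; simp
  have hL2 : LCmap ((0:ℝ),(1:ℝ),(0:ℝ)) = Complex.I := by rw [LCmap_apply]; simp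
  have hL3 : LCmap ((0:ℝ),(0:ℝ),(1:ℝ)) = 0 := by rw [LCmap_apply]; simp
  have he1 : (fun y => fderiv ℝ (gfun lam) y (1,0,0))
      =ᶠ[nhds x] (fun y : P3 => y.2.2 * (GC1 lam (LCmap y)).re) := by
    filter_upwards [hU] with y hy
    rw [hfd y hy, DD_apply, hL1]
    simp
  have he2 : (fun y => fderiv ℝ (gfun lam) y (0,1,0))
      =ᶠ[nhds x] (fun y : P3 => y.2.2 * (Complex.I * GC1 lam (LCmap y)).re) := by
    filter_upwards [hU] with y hy
    rw [hfd y hy, DD_apply, hL2]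
    simp
  have he3 : (fun y => fderiv ℝ (gfun lam) y (0,0,1))
      =ᶠ[nhds x] (fun y : P3 => (GC lam (LCmap y)).re) := by
    filter_upwards [hU] with y hy
    rw [hfd y hy, DD_apply, hL3]
    simp
  have hp1 : pd2 (gfun lam) (1,0,0) x = x.2.2 * ((1:ℂ) * GC2 lam (LCmap x)).re := by
    unfold pd2
    rw [he1.fderiv_eq, (hasFDerivAt_DD (hasDerivAt_GC1 lam hx)).fderiv, DD_apply, hL1]
    simp
  have hp2 : pd2 (gfun lam) (0,1,0) x
      = x.2.2 * (Complex.I * (Complex.I * GC2 lam (LCmap x))).re := by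
    unfold pd2
    rw [he2.fderiv_eq, (hasFDerivAt_DD ((hasDerivAt_GC1 lam hx).const_mul Complex.I)).fderiv,
      DD_apply, hL2]
    simp
  have hp3 : pd2 (gfun lam) (0,0,1) x = 0 := by
    unfold pd2
    rw [he3.fderiv_eq, (hasFDerivAt_RE (hasDerivAt_GC lam hx)).fderiv, RE_apply, hL3]
    simp
  unfold lap3
  rw [hp1, hp2, hp3]
  have : Complex.I * (Complex.I * GC2 lam (LCmap x)) = -GC2 lam (LCmap x) := by
    rw [← mul_assoc, Complex.I_mul_I, neg_one_mul]
  rw [this]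
  simp

/-- The pressure `p = z r^{λ−1} Φ(φ)` is twice differentiable on `Ω` and harmonic:
`Δp = 0` at every point of `Ω`. -/
theorem stmt13 (lam : ℝ) (hlam0 : 0 < lam) (hlam1 : lam < 1)
    (hlamEq : Real.sin (lam * om) = -lam * Real.sin om)
    (p : P3 → ℝ)
    (hp : ∀ r θ z : ℝ, 0 < r → r < 1 → 0 < θ → θ < om → 0 < z → z < 1 →
      p (r * Real.cos θ, r * Real.sin θ, z) = ppol lam r θ z) :
    ∀ x ∈ OmegaSet,
      (DifferentiableAt ℝ p x ∧ DifferentiableAt ℝ (fderiv ℝ p) x) ∧ lap3 p x = 0 := by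
  intro x hx
  have hev := eventually_mem hx
  have hxslit : LCmap x * cRot ∈ Complex.slitPlane := hev.self_of_nhds.2
  have heq : p =ᶠ[nhds x] gfun lam := by
    filter_upwards [hev] with v hv
    obtain ⟨r, θ, z, hr0, hr1, hθ0, hθ1, hz0, hz1, hveq⟩ := hv.1
    rw [hveq, hp r θ z hr0 hr1 hθ0 hθ1 hz0 hz1, gfun_polar lam z hr0 hθ0 hθ1]
  have hcd := contDiffAt_gfun lam hxslit
  have hfde : fderiv ℝ p =ᶠ[nhds x] fderiv ℝ (gfun lam) := heq.fderiv
  refine ⟨⟨?_, ?_⟩, ?_⟩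
  · exact heq.differentiableAt_iff.mpr (hcd.differentiableAt two_ne_zero)
  · refine hfde.differentiableAt_iff.mpr ?_
    exact (hcd.fderiv_right (le_refl 2)).differentiableAt one_ne_zero
  · have hsame : ∀ v : P3, pd2 p v x = pd2 (gfun lam) v x := by
      intro v
      unfold pd2
      have h : (fun y => fderiv ℝ p y v) =ᶠ[nhds x] (fun y => fderiv ℝ (gfun lam) y v) :=
        hfde.mono fun y hy => by simp only []; rw [hy]
      rw [h.fderiv_eq]
    unfold lap3
    rw [hsame, hsame, hsame]
    exact lap3_gfun lam hxslit
end
end
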